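/- arXiv:2508.06935 — 5 statements merged into one kernel-verified Lean document; each statement's English description precedes it below -/
import Mathlib

section
/- Let ω be the j-neighbour Bootstrap Percolation with noise set N ⊆ V×ℕ≥1 started from the all-ones configuration. If ω_o(T) = 0 for some (o,T) ∈ V×ℕ with T ≥ 1, then there exists a history graph ℋ = (𝒰, ℱ, 𝒰*) for (o,T) for the j-neighbour Bootstrap Percolation that is present in ω, i.e. ω_x(t) = 0 for every (x,t) ∈ 𝒰, and (x,t) ∈ N if and only if (x,t) ∈ 𝒰*. -/
open Classical
noncomputable section

namespace Paper

variable {V : Type*}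

/-- Number of neighbours of `x` whose value is `1` (`true`). -/
def cCount (G : SimpleGraph V) [DecidableRel G.Adj] [∀ v, Fintype (G.neighborSet v)]
    (η : V → Bool) (x : V) : ℕ :=
  ((G.neighborFinset x).filter fun y => η y = true).card

/-- The `j`-neighbour Bootstrap Percolation with noise set `N` and initial configuration `ξ`. -/
noncomputable def bootstrapPerc (G : SimpleGraph V) [DecidableRel G.Adj]
    [∀ v, Fintype (G.neighborSet v)] (j : ℕ) (N : Set (V × ℕ)) (ξ : V → Bool) :
    ℕ → V → Bool
  | 0 => ξ
  | t + 1 => fun x =>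
      if (x, t + 1) ∈ N then false
      else bootstrapPerc G j N ξ t x || decide (j ≤ cCount G (bootstrapPerc G j N ξ t) x)

/-- The `j`-threshold Consensus Process with noise set `N` and initial configuration `ξ`. -/
noncomputable def consensus (G : SimpleGraph V) [DecidableRel G.Adj]
    [∀ v, Fintype (G.neighborSet v)] (j : ℕ) (N : Set (V × ℕ)) (ξ : V → Bool) :
    ℕ → V → Bool
  | 0 => ξ
  | t + 1 => fun x =>
      if (x, t + 1) ∈ N then false
      else decide (j ≤ cCount G (consensus G j N ξ t) x)

/-- `∂_E K`: number of edges with exactly one endpoint in `K`. -/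
def edgeBoundaryCard (G : SimpleGraph V) [DecidableRel G.Adj]
    [∀ v, Fintype (G.neighborSet v)] (K : Finset V) : ℕ :=
  ∑ x ∈ K, ((G.neighborFinset x).filter fun y => y ∉ K).card

/-- The edge expansion constant `Φ_E(G)`. -/
noncomputable def edgeExpansion (G : SimpleGraph V) [DecidableRel G.Adj]
    [∀ v, Fintype (G.neighborSet v)] : ℝ :=
  sInf {r : ℝ | ∃ K : Finset V, K.Nonempty ∧ r = (edgeBoundaryCard G K : ℝ) / (K.card : ℝ)}

/-- `∂_V K`: number of vertices outside `K` adjacent to a vertex of `K`. -/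
def vertexBoundaryCard [DecidableEq V] (G : SimpleGraph V) [DecidableRel G.Adj]
    [∀ v, Fintype (G.neighborSet v)] (K : Finset V) : ℕ :=
  ((K.biUnion fun x => G.neighborFinset x) \ K).card

/-- The vertex expansion constant `Φ_V(G)`. -/
noncomputable def vertexExpansion [DecidableEq V] (G : SimpleGraph V) [DecidableRel G.Adj]
    [∀ v, Fintype (G.neighborSet v)] : ℝ :=
  sInf {r : ℝ | ∃ K : Finset V, K.Nonempty ∧ r = (vertexBoundaryCard G K : ℝ) / (K.card : ℝ)}

/-- A history graph `(𝒰, ℱ, 𝒰*)` for `(o, T)`.  If `bp = true` it is a history graph for the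
`j`-neighbour Bootstrap Percolation (one outgoing straight edge and `deg x − j + 1` outgoing
oblique edges at every vertex of `𝒰 \ 𝒰*`); if `bp = false` it is a history graph for the
`j`-threshold Consensus Process (no straight edges and `deg x − j + 1` outgoing oblique edges). -/
structure HistoryGraph (G : SimpleGraph V) [DecidableRel G.Adj]
    [∀ v, Fintype (G.neighborSet v)] (j : ℕ) (o : V) (T : ℕ) (bp : Bool) where
  U : Finset (V × ℕ)
  F : Finset ((V × ℕ) × (V × ℕ))
  Ustar : Finset (V × ℕ)
  ustar_subset : Ustar ⊆ U
  edge_mem_fst : ∀ e ∈ F, e.1 ∈ U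
  edge_mem_snd : ∀ e ∈ F, e.2 ∈ U
  edge_time : ∀ e ∈ F, e.1.2 = e.2.2 + 1
  edge_space : ∀ e ∈ F, e.1.1 = e.2.1 ∨ G.Adj e.1.1 e.2.1
  conn : ∀ u ∈ U, ∀ v ∈ U,
    Relation.ReflTransGen (fun a b => (a, b) ∈ F ∨ (b, a) ∈ F) u v
  root_mem : (o, T) ∈ U
  time_range : ∀ u ∈ U, u ≠ (o, T) → 1 ≤ u.2 ∧ u.2 ≤ T
  time_one_star : ∀ u ∈ U, u.2 = 1 → u ∈ Ustar
  star_no_out : ∀ u ∈ Ustar, ∀ e ∈ F, e.1 ≠ u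
  straight_count : ∀ u ∈ U, u ∉ Ustar →
      (F.filter fun e => e.1 = u ∧ e.2.1 = u.1).card = cond bp 1 0
  oblique_count : ∀ u ∈ U, u ∉ Ustar →
      (F.filter fun e => e.1 = u ∧ e.2.1 ≠ u.1).card = G.degree u.1 + 1 - j

/-- The strong product `G ⊠ ℕ`. -/
def strongProd (G : SimpleGraph V) : SimpleGraph (V × ℕ) where
  Adj p q := p ≠ q ∧ (p.2 ≤ q.2 + 1 ∧ q.2 ≤ p.2 + 1) ∧ (p.1 = q.1 ∨ G.Adj p.1 q.1)
  symm := ⟨by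
    rintro p q ⟨h1, ⟨h2, h3⟩, h4⟩
    exact ⟨h1.symm, ⟨h3, h2⟩, h4.elim (fun e => Or.inl e.symm) fun a => Or.inr a.symm⟩⟩
  loopless := ⟨fun p h => h.1 rfl⟩

/-- The connected component of `p` in the subgraph of `G ⊠ ℕ` induced by `Z`. -/
def cluster (G : SimpleGraph V) (Z : Set (V × ℕ)) (p : V × ℕ) : Set (V × ℕ) :=
  {q | p ∈ Z ∧ q ∈ Z ∧
    Relation.ReflTransGen (fun a b => a ∈ Z ∧ b ∈ Z ∧ (strongProd G).Adj a b) p q}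

/-- The witness-root property defining `j ≤ j̄`. -/
def radialGood (G : SimpleGraph V) [DecidableRel G.Adj] [∀ v, Fintype (G.neighborSet v)]
    (j : ℕ) : Prop :=
  ∃ r : V, ∀ x : V,
    j ≤ ((G.neighborFinset x).filter fun y => G.dist r y = G.dist r x + 1).card

end Paper

section BootAux
open Classical Paper

variable {V : Type*} (G : SimpleGraph V) [DecidableRel G.Adj] [∀ v, Fintype (G.neighborSet v)]
  (j : ℕ) (N : Set (V × ℕ))

/-- Abbreviation for the bootstrap percolation started from all ones. -/
noncomputable def bpx : ℕ → V → Bool := bootstrapPerc G j N (fun _ => true)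

lemma bpx_zero (x : V) : bpx G j N 0 x = true := rfl

lemma bpx_succ (t : ℕ) (x : V) :
    bpx G j N (t + 1) x = if (x, t + 1) ∈ N then false
      else bpx G j N t x || decide (j ≤ cCount G (bpx G j N t) x) := rfl

lemma bpx_succ_false {t : ℕ} {x : V} (h : bpx G j N (t + 1) x = false) (hn : (x, t + 1) ∉ N) :
    bpx G j N t x = false ∧ cCount G (bpx G j N t) x < j := by
  rw [bpx_succ, if_neg hn] at h
  simp only [Bool.or_eq_false_iff, decide_eq_false_iff_not, not_le] at h
  exact h

/-- Neighbours of `x` that are zero at time `t`. -/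
noncomputable def Zset (x : V) (t : ℕ) : Finset V :=
  (G.neighborFinset x).filter fun y => bpx G j N t y = false

lemma Zset_card {t : ℕ} {x : V} (hj1 : 1 ≤ j) (hjd : j ≤ G.degree x)
    (h : bpx G j N (t + 1) x = false) (hn : (x, t + 1) ∉ N) :
    G.degree x + 1 - j ≤ (Zset G j N x t).card := by
  obtain ⟨-, hc⟩ := bpx_succ_false G j N h hn
  have hsum : cCount G (bpx G j N t) x + (Zset G j N x t).card = G.degree x := by
    have h1 := Finset.card_filter_add_card_filter_not
      (s := G.neighborFinset x) (p := fun y => bpx G j N t y = true)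
    have h2 : ((G.neighborFinset x).filter fun y => ¬ (bpx G j N t y = true))
        = Zset G j N x t := by
      apply Finset.filter_congr
      intro y _
      exact iff_of_eq (Bool.not_eq_true _)
    rw [h2] at h1
    exact h1
  omega

/-- A chosen set of exactly `deg x + 1 - j` zero-neighbours. -/
noncomputable def obl (x : V) (t : ℕ) : Finset V :=
  if h : G.degree x + 1 - j ≤ (Zset G j N x t).card then
    (Finset.exists_subset_card_eq h).choose
  else ∅

lemma obl_subset (x : V) (t : ℕ) : obl G j N x t ⊆ Zset G j N x t := by
  unfold obl
  split
  · exact (Finset.exists_subset_card_eq ‹_›).choose_spec.1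
  · simp

lemma obl_card {x : V} {t : ℕ} (h : G.degree x + 1 - j ≤ (Zset G j N x t).card) :
    (obl G j N x t).card = G.degree x + 1 - j := by
  unfold obl
  rw [dif_pos h]
  exact (Finset.exists_subset_card_eq h).choose_spec.2

/-- The set of children of a space-time vertex. -/
noncomputable def out (p : V × ℕ) : Finset (V × ℕ) :=
  if p.2 ≠ 0 ∧ bpx G j N p.2 p.1 = false ∧ p ∉ N then
    insert (p.1, p.2 - 1) ((obl G j N p.1 (p.2 - 1)).image fun y => (y, p.2 - 1))
  else ∅

lemma out_eq {x : V} {t : ℕ} (h : bpx G j N (t + 1) x = false) (hn : (x, t + 1) ∉ N) :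
    out G j N (x, t + 1) = insert (x, t) ((obl G j N x t).image fun y => (y, t)) := by
  unfold out
  rw [if_pos]
  · simp
  · exact ⟨by simp, h, hn⟩

lemma mem_out {c p : V × ℕ} (hc : c ∈ out G j N p) :
    ∃ x t, p = (x, t + 1) ∧ bpx G j N (t + 1) x = false ∧ (x, t + 1) ∉ N ∧
      c.2 = t ∧ bpx G j N t c.1 = false ∧ (c.1 = x ∨ G.Adj x c.1) := by
  obtain ⟨x, t⟩ := p
  cases t with
  | zero => simp [out] at hc
  | succ t =>
    unfold out at hc
    split at hc
    · rename_i h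
      obtain ⟨-, h1, h2⟩ := h
      simp only at h1 h2
      refine ⟨x, t, rfl, h1, h2, ?_⟩
      simp only [Nat.add_sub_cancel] at hc
      simp only [Finset.mem_insert, Finset.mem_image] at hc
      rcases hc with rfl | ⟨y, hy, rfl⟩
      · exact ⟨rfl, (bpx_succ_false G j N h1 h2).1, Or.inl rfl⟩
      · have hz := obl_subset G j N x t hy
        simp only [Zset, Finset.mem_filter, SimpleGraph.mem_neighborFinset] at hz
        exact ⟨rfl, hz.2, Or.inr hz.1⟩
    · simp at hc

lemma out_empty_of_mem_N {p : V × ℕ} (hp : p ∈ N) : out G j N p = ∅ := by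
  unfold out
  rw [if_neg]
  rintro ⟨-, -, hn⟩
  exact hn hp

lemma out_time_one (x : V) : out G j N (x, 1) = ∅ := by
  unfold out
  rw [if_neg]
  rintro ⟨-, h, hn⟩
  simp only at h hn
  have h : bpx G j N (0 + 1) x = false := h
  have hn : (x, 0 + 1) ∉ N := hn
  have := (bpx_succ_false G j N h hn).1
  rw [bpx_zero] at this
  simp at this

/-- Descendants with given fuel. -/
noncomputable def desc : ℕ → V × ℕ → Finset (V × ℕ)
  | 0, p => {p}
  | n + 1, p => insert p ((out G j N p).biUnion (desc n))

/-- Edges with given fuel. -/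
noncomputable def edgs : ℕ → V × ℕ → Finset ((V × ℕ) × (V × ℕ))
  | 0, _ => ∅
  | n + 1, p => ((out G j N p).image fun c => (p, c)) ∪ (out G j N p).biUnion (edgs n)

lemma self_mem_desc (n : ℕ) (p : V × ℕ) : p ∈ desc G j N n p := by
  cases n <;> simp [desc]

lemma mem_desc_succ {n : ℕ} {p q : V × ℕ} :
    q ∈ desc G j N (n + 1) p ↔ q = p ∨ ∃ c ∈ out G j N p, q ∈ desc G j N n c := by
  simp [desc]

lemma mem_edgs_succ {n : ℕ} {p : V × ℕ} {e : (V × ℕ) × (V × ℕ)} :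
    e ∈ edgs G j N (n + 1) p ↔
      (∃ c ∈ out G j N p, e = (p, c)) ∨ ∃ c ∈ out G j N p, e ∈ edgs G j N n c := by
  simp [edgs, eq_comm]

lemma desc_zero : ∀ n : ℕ, ∀ p : V × ℕ, bpx G j N p.2 p.1 = false →
    ∀ q ∈ desc G j N n p, bpx G j N q.2 q.1 = false := by
  intro n
  induction n with
  | zero => intro p hp q hq; simp [desc] at hq; subst hq; exact hp
  | succ n ih =>
    intro p hp q hq
    rcases (mem_desc_succ G j N).1 hq with rfl | ⟨c, hc, hq'⟩
    · exact hp
    · obtain ⟨x, t, -, -, -, hct, hcz, -⟩ := mem_out G j N hc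
      exact ih c (by rw [hct]; exact hcz) q hq'

lemma desc_time_pos : ∀ n : ℕ, ∀ p : V × ℕ, 1 ≤ p.2 →
    ∀ q ∈ desc G j N n p, 1 ≤ q.2 := by
  intro n
  induction n with
  | zero => intro p hp q hq; simp [desc] at hq; subst hq; exact hp
  | succ n ih =>
    intro p hp q hq
    rcases (mem_desc_succ G j N).1 hq with rfl | ⟨c, hc, hq'⟩
    · exact hp
    · obtain ⟨x, t, hpx, -, -, hct, -, -⟩ := mem_out G j N hc
      have ht : 1 ≤ t := by
        by_contra h
        have ht0 : t = 0 := by omega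
        rw [hpx, ht0, out_time_one] at hc
        simp at hc
      exact ih c (by rw [hct]; exact ht) q hq'

lemma desc_time_le : ∀ n : ℕ, ∀ p : V × ℕ, ∀ q ∈ desc G j N n p, q.2 ≤ p.2 := by
  intro n
  induction n with
  | zero => intro p q hq; simp [desc] at hq; subst hq; exact le_refl _
  | succ n ih =>
    intro p q hq
    rcases (mem_desc_succ G j N).1 hq with rfl | ⟨c, hc, hq'⟩
    · exact le_refl _
    · obtain ⟨x, t, hpx, -, -, hct, -, -⟩ := mem_out G j N hc
      have := ih c q hq'
      rw [hpx]
      omega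

lemma edgs_sub : ∀ n : ℕ, ∀ p : V × ℕ, ∀ e ∈ edgs G j N n p,
    e.1 ∈ desc G j N n p ∧ e.2 ∈ out G j N e.1 ∧ e.2 ∈ desc G j N n p := by
  intro n
  induction n with
  | zero => intro p e he; simp [edgs] at he
  | succ n ih =>
    intro p e he
    rcases (mem_edgs_succ G j N).1 he with ⟨c, hc, rfl⟩ | ⟨c, hc, he'⟩
    · exact ⟨self_mem_desc G j N _ _,
        hc, (mem_desc_succ G j N).2 (Or.inr ⟨c, hc, self_mem_desc G j N _ _⟩)⟩
    · obtain ⟨h1, h2, h3⟩ := ih c e he'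
      exact ⟨(mem_desc_succ G j N).2 (Or.inr ⟨c, hc, h1⟩), h2,
        (mem_desc_succ G j N).2 (Or.inr ⟨c, hc, h3⟩)⟩

lemma edgs_mono {n : ℕ} {p c : V × ℕ} (hc : c ∈ out G j N p) :
    edgs G j N n c ⊆ edgs G j N (n + 1) p := by
  intro e he
  exact (mem_edgs_succ G j N).2 (Or.inr ⟨c, hc, he⟩)

lemma bootClosure : ∀ n : ℕ, ∀ p : V × ℕ, 1 ≤ p.2 → p.2 ≤ n →
    ∀ q ∈ desc G j N n p, ∀ c ∈ out G j N q,
      c ∈ desc G j N n p ∧ (q, c) ∈ edgs G j N n p := by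
  intro n
  induction n with
  | zero => intro p h1 h2; omega
  | succ n ih =>
    intro p hp1 hpn q hq c hc
    rcases (mem_desc_succ G j N).1 hq with rfl | ⟨c', hc', hq'⟩
    · exact ⟨(mem_desc_succ G j N).2 (Or.inr ⟨c, hc, self_mem_desc G j N _ _⟩),
        (mem_edgs_succ G j N).2 (Or.inl ⟨c, hc, rfl⟩)⟩
    · obtain ⟨x, t, hpx, -, -, hct, -, -⟩ := mem_out G j N hc'
      have ht : 1 ≤ t := by
        by_contra h
        have ht0 : t = 0 := by omega
        rw [hpx, ht0, out_time_one] at hc'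
        simp at hc'
      have htn : t ≤ n := by rw [hpx] at hpn; simpa using hpn
      obtain ⟨h1, h2⟩ := ih c' (by rw [hct]; exact ht) (by rw [hct]; exact htn) q hq' c hc
      exact ⟨(mem_desc_succ G j N).2 (Or.inr ⟨c', hc', h1⟩), edgs_mono G j N hc' h2⟩

lemma conn_desc : ∀ n : ℕ, ∀ p : V × ℕ, ∀ q ∈ desc G j N n p,
    Relation.ReflTransGen
      (fun a b => (a, b) ∈ edgs G j N n p ∨ (b, a) ∈ edgs G j N n p) p q := by
  intro n
  induction n with
  | zero => intro p q hq; simp [desc] at hq; subst hq; exact Relation.ReflTransGen.refl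
  | succ n ih =>
    intro p q hq
    rcases (mem_desc_succ G j N).1 hq with rfl | ⟨c, hc, hq'⟩
    · exact Relation.ReflTransGen.refl
    · have h1 := ih c q hq'
      have h2 : Relation.ReflTransGen
          (fun a b => (a, b) ∈ edgs G j N (n + 1) p ∨ (b, a) ∈ edgs G j N (n + 1) p) c q := by
        refine Relation.ReflTransGen.mono ?_ c q h1
        intro a b hab
        exact hab.imp (fun h => edgs_mono G j N hc h) (fun h => edgs_mono G j N hc h)
      exact Relation.ReflTransGen.head
        (Or.inl ((mem_edgs_succ G j N).2 (Or.inl ⟨c, hc, rfl⟩))) h2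

end BootAux

open Paper in
/-- if Bootstrap Percolation with noise set `N` started from all ones has
`ω_o(T) = 0` with `T ≥ 1`, then there is a history graph for `(o, T)` for the `j`-neighbour
Bootstrap Percolation which is present in `ω`. -/
theorem bootstrap_has_present_history_graph
    {V : Type*} [Infinite V]
    (G : SimpleGraph V) [DecidableRel G.Adj] [∀ v, Fintype (G.neighborSet v)]
    (hconn : G.Connected) (Δ : ℕ) (hΔ : ∀ x, G.degree x ≤ Δ)
    (j : ℕ) (hj1 : 1 ≤ j) (hjδ : ∀ x, j ≤ G.degree x)
    (N : Set (V × ℕ)) (hN : ∀ p ∈ N, 1 ≤ p.2)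
    (o : V) (T : ℕ) (hT : 1 ≤ T)
    (h0 : bootstrapPerc G j N (fun _ => true) T o = false) :
    ∃ H : HistoryGraph G j o T true,
      (∀ u ∈ H.U, bootstrapPerc G j N (fun _ => true) u.2 u.1 = false) ∧
      (∀ u ∈ H.U, (u ∈ N ↔ u ∈ H.Ustar)) := by
  set U : Finset (V × ℕ) := desc G j N T (o, T) with hUdef
  set F : Finset ((V × ℕ) × (V × ℕ)) := edgs G j N T (o, T) with hFdef
  have h0' : bpx G j N (o, T).2 (o, T).1 = false := h0
  have hU0 : ∀ u ∈ U, bpx G j N u.2 u.1 = false :=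
    desc_zero G j N T (o, T) h0'
  have hUt1 : ∀ u ∈ U, 1 ≤ u.2 := desc_time_pos G j N T (o, T) hT
  have hUt2 : ∀ u ∈ U, u.2 ≤ T := desc_time_le G j N T (o, T)
  have hclos : ∀ q ∈ U, ∀ c ∈ out G j N q, c ∈ U ∧ (q, c) ∈ F :=
    bootClosure G j N T (o, T) hT (le_refl T)
  have hFsub : ∀ e ∈ F, e.1 ∈ U ∧ e.2 ∈ out G j N e.1 ∧ e.2 ∈ U :=
    edgs_sub G j N T (o, T)
  refine ⟨⟨U, F, U.filter (fun u => u ∈ N), Finset.filter_subset _ _,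
    fun e he => (hFsub e he).1, fun e he => (hFsub e he).2.2, ?_, ?_, ?_,
    self_mem_desc G j N T (o, T), ?_, ?_, ?_, ?_, ?_⟩, ?_, ?_⟩
  · -- edge_time
    intro e he
    obtain ⟨x, t, he1, -, -, hct, -, -⟩ := mem_out G j N (hFsub e he).2.1
    rw [he1, hct]
  · -- edge_space
    intro e he
    obtain ⟨x, t, he1, -, -, -, -, hadj⟩ := mem_out G j N (hFsub e he).2.1
    rw [he1]
    exact hadj.imp Eq.symm id
  · -- conn
    intro u hu v hv
    have hs : Symmetric (fun a b : V × ℕ => (a, b) ∈ F ∨ (b, a) ∈ F) :=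
      fun a b h => h.symm
    haveI : Std.Symm (fun a b : V × ℕ => (a, b) ∈ F ∨ (b, a) ∈ F) := ⟨hs⟩
    exact ((Relation.ReflTransGen.symmetric.symm _ _)
      (conn_desc G j N T (o, T) u hu)).trans (conn_desc G j N T (o, T) v hv)
  · -- time_range
    intro u hu _
    exact ⟨hUt1 u hu, hUt2 u hu⟩
  · -- time_one_star
    intro u hu h1
    refine Finset.mem_filter.2 ⟨hu, ?_⟩
    by_contra hn
    obtain ⟨x, tu⟩ := u
    simp only at h1
    subst h1
    have hz : bpx G j N (0 + 1) x = false := hU0 (x, 1) hu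
    have := (bpx_succ_false G j N hz (by simpa using hn)).1
    rw [bpx_zero] at this
    simp at this
  · -- star_no_out
    intro u hus e he h
    have hn : u ∈ N := (Finset.mem_filter.1 hus).2
    have h2 := (hFsub e he).2.1
    rw [h, out_empty_of_mem_N G j N hn] at h2
    simp at h2
  · -- straight_count
    intro u hu hus
    have hun : u ∉ N := fun h => hus (Finset.mem_filter.2 ⟨hu, h⟩)
    obtain ⟨x, tu⟩ := u
    obtain ⟨t, rfl⟩ : ∃ t, tu = t + 1 := ⟨tu - 1, by have := hUt1 _ hu; omega⟩
    have hbx : bpx G j N (t + 1) x = false := hU0 _ hu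
    have hout := out_eq G j N hbx hun
    have key :
        (F.filter fun e => e.1 = (x, t + 1) ∧ e.2.1 = (x, t + 1).1)
          = ((out G j N (x, t + 1)).filter fun c => c.1 = (x, t + 1).1).image
              fun c => ((x, t + 1), c) := by
      ext e
      obtain ⟨e1, e2⟩ := e
      simp only [Finset.mem_filter, Finset.mem_image, Prod.mk.injEq]
      constructor
      · rintro ⟨heF, he1, hP⟩
        subst he1
        exact ⟨e2, ⟨(hFsub _ heF).2.1, hP⟩, rfl, rfl⟩
      · rintro ⟨c, ⟨hc, hP⟩, rfl, rfl⟩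
        exact ⟨(hclos _ hu c hc).2, rfl, hP⟩
    have hinj : Function.Injective fun c : V × ℕ => ((x, t + 1), c) :=
      fun a b h => by simpa using h
    rw [key, Finset.card_image_of_injective _ hinj]
    have hfs : ((out G j N (x, t + 1)).filter fun c => c.1 = (x, t + 1).1)
        = {(x, t)} := by
      ext c
      simp only [hout, Finset.mem_filter, Finset.mem_insert, Finset.mem_image,
        Finset.mem_singleton]
      constructor
      · rintro ⟨rfl | ⟨y, hy, rfl⟩, h1⟩
        · rfl
        · exfalso
          have hz := obl_subset G j N x t hy
          simp only [Zset, Finset.mem_filter, SimpleGraph.mem_neighborFinset] at hz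
          exact hz.1.ne' h1
      · rintro rfl
        exact ⟨Or.inl rfl, rfl⟩
    rw [hfs]
    rfl
  · -- oblique_count
    intro u hu hus
    have hun : u ∉ N := fun h => hus (Finset.mem_filter.2 ⟨hu, h⟩)
    obtain ⟨x, tu⟩ := u
    obtain ⟨t, rfl⟩ : ∃ t, tu = t + 1 := ⟨tu - 1, by have := hUt1 _ hu; omega⟩
    have hbx : bpx G j N (t + 1) x = false := hU0 _ hu
    have hout := out_eq G j N hbx hun
    have hcard : G.degree x + 1 - j ≤ (Zset G j N x t).card :=
      Zset_card G j N hj1 (hjδ x) hbx hun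
    have key :
        (F.filter fun e => e.1 = (x, t + 1) ∧ e.2.1 ≠ (x, t + 1).1)
          = ((out G j N (x, t + 1)).filter fun c => c.1 ≠ (x, t + 1).1).image
              fun c => ((x, t + 1), c) := by
      ext e
      obtain ⟨e1, e2⟩ := e
      simp only [Finset.mem_filter, Finset.mem_image, Prod.mk.injEq]
      constructor
      · rintro ⟨heF, he1, hP⟩
        subst he1
        exact ⟨e2, ⟨(hFsub _ heF).2.1, hP⟩, rfl, rfl⟩
      · rintro ⟨c, ⟨hc, hP⟩, rfl, rfl⟩
        exact ⟨(hclos _ hu c hc).2, rfl, hP⟩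
    have hinj : Function.Injective fun c : V × ℕ => ((x, t + 1), c) :=
      fun a b h => by simpa using h
    rw [key, Finset.card_image_of_injective _ hinj]
    have hfs : ((out G j N (x, t + 1)).filter fun c => c.1 ≠ (x, t + 1).1)
        = (obl G j N x t).image fun y => (y, t) := by
      ext c
      simp only [hout, Finset.mem_filter, Finset.mem_insert, Finset.mem_image]
      constructor
      · rintro ⟨rfl | ⟨y, hy, rfl⟩, h1⟩
        · exact absurd rfl h1
        · exact ⟨y, hy, rfl⟩
      · rintro ⟨y, hy, rfl⟩
        have hz := obl_subset G j N x t hy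
        simp only [Zset, Finset.mem_filter, SimpleGraph.mem_neighborFinset] at hz
        exact ⟨Or.inr ⟨y, hy, rfl⟩, hz.1.ne'⟩
    have hinj2 : Function.Injective fun y : V => (y, t) :=
      fun a b h => by simpa using h
    rw [hfs, Finset.card_image_of_injective _ hinj2, obl_card G j N hcard]
  · -- present
    exact fun u hu => hU0 u hu
  · -- noise iff star
    intro u hu
    exact ⟨fun h => Finset.mem_filter.2 ⟨hu, h⟩, fun h => (Finset.mem_filter.1 h).2⟩
end
end

section
/- Let χ be the j-threshold Consensus Process with noise set N ⊆ V×ℕ≥1 started from the all-ones configuration. If χ_o(T) = 0 for some (o,T) ∈ V×ℕ with T ≥ 1, then there exists a history graph ℋ = (𝒰, ℱ, 𝒰*) for (o,T) for the j-threshold Consensus Process that is present in χ, i.e. χ_x(t) = 0 for every (x,t) ∈ 𝒰, and (x,t) ∈ N if and only if (x,t) ∈ 𝒰*. -/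
open Classical
noncomputable section

namespace CHG

open Finset

variable {V : Type*} (G : SimpleGraph V) [DecidableRel G.Adj] [∀ v, Fintype (G.neighborSet v)]
  (j : ℕ) (N : Set (V × ℕ))

noncomputable def chi : ℕ → V → Bool := Paper.consensus G j N fun _ => true

lemma chi_succ (t : ℕ) (x : V) :
    chi G j N (t + 1) x = if (x, t + 1) ∈ N then false
      else decide (j ≤ Paper.cCount G (chi G j N t) x) := rfl

lemma chi_zero (x : V) : chi G j N 0 x = true := rfl

lemma cCount_step {t : ℕ} {x : V} (h : chi G j N (t + 1) x = false)
    (hn : (x, t + 1) ∉ N) : Paper.cCount G (chi G j N t) x < j := by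
  rw [chi_succ, if_neg hn] at h
  simpa using h

lemma one_in_N (hjδ : ∀ x, j ≤ G.degree x) {x : V} (h : chi G j N 1 x = false) :
    (x, 1) ∈ N := by
  by_contra hn
  have hc := cCount_step G j N h hn
  have hd : Paper.cCount G (chi G j N 0) x = G.degree x := by
    show ((G.neighborFinset x).filter fun y => chi G j N 0 y = true).card = G.degree x
    have he : ((G.neighborFinset x).filter fun y => chi G j N 0 y = true)
        = G.neighborFinset x := Finset.filter_true_of_mem (fun y _ => rfl)
    rw [he]
    rfl
  have := hjδ x
  omega

lemma sel_exists (hj1 : 1 ≤ j) (hjδ : ∀ x, j ≤ G.degree x) {t : ℕ} {x : V}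
    (h : chi G j N (t + 1) x = false) (hn : (x, t + 1) ∉ N) :
    ∃ s : Finset V, s ⊆ ((G.neighborFinset x).filter fun y => chi G j N t y = false)
      ∧ s.card = G.degree x + 1 - j := by
  have hc := cCount_step G j N h hn
  have hsum := Finset.card_filter_add_card_filter_not
    (s := G.neighborFinset x) (p := fun y => chi G j N t y = true)
  have hfe : ((G.neighborFinset x).filter fun y => ¬ chi G j N t y = true)
      = ((G.neighborFinset x).filter fun y => chi G j N t y = false) := by
    apply Finset.filter_congr
    intro y _
    simp
  rw [hfe] at hsum
  have hdeg : (G.neighborFinset x).card = G.degree x := rfl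
  have hcc : Paper.cCount G (chi G j N t) x
      = ((G.neighborFinset x).filter fun y => chi G j N t y = true).card := rfl
  have hjx := hjδ x
  apply Finset.exists_subset_card_eq
  omega

noncomputable def Sel (x : V) (t : ℕ) : Finset V :=
  if h : ∃ s : Finset V, s ⊆ ((G.neighborFinset x).filter fun y => chi G j N (t - 1) y = false)
      ∧ s.card = G.degree x + 1 - j then h.choose else ∅

lemma sel_spec (hj1 : 1 ≤ j) (hjδ : ∀ x, j ≤ G.degree x) {t : ℕ} {x : V}
    (h : chi G j N t x = false) (hn : (x, t) ∉ N) (ht : 1 ≤ t) :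
    Sel G j N x t ⊆ ((G.neighborFinset x).filter fun y => chi G j N (t - 1) y = false)
      ∧ (Sel G j N x t).card = G.degree x + 1 - j := by
  obtain ⟨t', rfl⟩ : ∃ t', t = t' + 1 := ⟨t - 1, by omega⟩
  have hex := sel_exists G j N hj1 hjδ (t := t') h hn
  simp only [Nat.add_sub_cancel] at hex ⊢
  rw [Sel]
  simp only [Nat.add_sub_cancel]
  rw [dif_pos hex]
  exact hex.choose_spec

lemma two_le (hjδ : ∀ x, j ≤ G.degree x) {t : ℕ} {x : V}
    (h : chi G j N t x = false) (hn : (x, t) ∉ N) (ht : 1 ≤ t) : 2 ≤ t := by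
  rcases Nat.lt_or_ge t 2 with h2 | h2
  · interval_cases t
    · exact absurd (one_in_N G j N hjδ h) hn
  · exact h2

noncomputable def Ufun : ℕ → V → Finset (V × ℕ)
  | 0, x => {(x, 0)}
  | t + 1, x => insert (x, t + 1)
      (if (x, t + 1) ∈ N then ∅ else (Sel G j N x (t + 1)).biUnion fun y => Ufun t y)

lemma Ufun_succ (t : ℕ) (x : V) :
    Ufun G j N (t + 1) x = insert (x, t + 1)
      (if (x, t + 1) ∈ N then ∅ else (Sel G j N x (t + 1)).biUnion fun y => Ufun G j N t y) :=
  rfl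

lemma root_mem_Ufun {t : ℕ} (ht : 1 ≤ t) (x : V) : (x, t) ∈ Ufun G j N t x := by
  obtain ⟨t', rfl⟩ : ∃ t', t = t' + 1 := ⟨t - 1, by omega⟩
  rw [Ufun_succ]
  exact Finset.mem_insert_self _ _

def Rel (u v : V × ℕ) : Prop := u ∉ N ∧ v.2 = u.2 - 1 ∧ v.1 ∈ Sel G j N u.1 u.2

lemma main (hj1 : 1 ≤ j) (hjδ : ∀ x, j ≤ G.degree x) :
    ∀ t, ∀ x : V, chi G j N t x = false → 1 ≤ t →
      (∀ u ∈ Ufun G j N t x, chi G j N u.2 u.1 = false ∧ 1 ≤ u.2 ∧ u.2 ≤ t) ∧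
      (∀ u ∈ Ufun G j N t x, u ∉ N → ∀ y ∈ Sel G j N u.1 u.2,
        (y, u.2 - 1) ∈ Ufun G j N t x) ∧
      (∀ u ∈ Ufun G j N t x, Relation.ReflTransGen
        (fun a b => a ∈ Ufun G j N t x ∧ b ∈ Ufun G j N t x ∧
          (Rel G j N a b ∨ Rel G j N b a)) u (x, t)) := by
  intro t
  induction t with
  | zero => intro x _ ht; omega
  | succ t ih =>
    intro x hx ht
    by_cases hn : (x, t + 1) ∈ N
    · have hU : Ufun G j N (t + 1) x = {(x, t + 1)} := by
        rw [Ufun_succ, if_pos hn]; rfl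
      rw [hU]
      refine ⟨?_, ?_, ?_⟩
      · intro u hu
        rw [Finset.mem_singleton] at hu
        subst hu
        exact ⟨hx, by omega, le_refl _⟩
      · intro u hu hun
        rw [Finset.mem_singleton] at hu
        subst hu
        exact absurd hn hun
      · intro u hu
        rw [Finset.mem_singleton] at hu
        subst hu
        exact Relation.ReflTransGen.refl
    · have hsel := sel_spec G j N hj1 hjδ hx hn (by omega)
      simp only [Nat.add_sub_cancel] at hsel
      have ht2 : 2 ≤ t + 1 := two_le G j N hjδ hx hn (by omega)
      have ht1 : 1 ≤ t := by omega
      have hU : Ufun G j N (t + 1) x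
          = insert (x, t + 1) ((Sel G j N x (t + 1)).biUnion fun y => Ufun G j N t y) := by
        rw [Ufun_succ, if_neg hn]
      have hmem : ∀ u, u ∈ Ufun G j N (t + 1) x ↔
          u = (x, t + 1) ∨ ∃ y ∈ Sel G j N x (t + 1), u ∈ Ufun G j N t y := by
        intro u
        rw [hU]
        simp [Finset.mem_insert, Finset.mem_biUnion]
      have hsub : ∀ y ∈ Sel G j N x (t + 1), Ufun G j N t y ⊆ Ufun G j N (t + 1) x := by
        intro y hy u hu
        rw [hmem]
        exact Or.inr ⟨y, hy, hu⟩
      have hchiy : ∀ y ∈ Sel G j N x (t + 1), chi G j N t y = false := by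
        intro y hy
        have := hsel.1 hy
        rw [Finset.mem_filter] at this
        exact this.2
      refine ⟨?_, ?_, ?_⟩
      · intro u hu
        rw [hmem] at hu
        rcases hu with rfl | ⟨y, hy, hu⟩
        · exact ⟨hx, by omega, le_refl _⟩
        · have := (ih y (hchiy y hy) ht1).1 u hu
          exact ⟨this.1, this.2.1, by omega⟩
      · intro u hu hun
        rw [hmem] at hu
        rcases hu with rfl | ⟨y, hy, hu⟩
        · intro y hy
          simp only [Nat.add_sub_cancel]
          exact hsub y hy (root_mem_Ufun G j N ht1 y)
        · intro z hz
          exact hsub y hy ((ih y (hchiy y hy) ht1).2.1 u hu hun z hz)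
      · intro u hu
        rw [hmem] at hu
        rcases hu with rfl | ⟨y, hy, hu⟩
        · exact Relation.ReflTransGen.refl
        · have hyroot : (y, t) ∈ Ufun G j N (t + 1) x :=
            hsub y hy (root_mem_Ufun G j N ht1 y)
          have hchain := (ih y (hchiy y hy) ht1).2.2 u hu
          have hchain' : Relation.ReflTransGen
              (fun a b => a ∈ Ufun G j N (t + 1) x ∧ b ∈ Ufun G j N (t + 1) x ∧
                (Rel G j N a b ∨ Rel G j N b a)) u (y, t) := by
            refine Relation.ReflTransGen.mono ?_ _ _ hchain
            intro a b hab
            exact ⟨hsub y hy hab.1, hsub y hy hab.2.1, hab.2.2⟩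
          refine hchain'.tail ?_
          refine ⟨hyroot, by rw [hmem]; exact Or.inl rfl, Or.inr ?_⟩
          exact ⟨hn, by simp, by simpa using hy⟩

noncomputable def eout (u : V × ℕ) : Finset ((V × ℕ) × (V × ℕ)) :=
  if u ∈ N then ∅ else (Sel G j N u.1 u.2).image fun y => (u, (y, u.2 - 1))

lemma mem_eout (u e) : e ∈ eout G j N u ↔ e.1 = u ∧ Rel G j N u e.2 := by
  rw [eout, Rel]
  by_cases hn : u ∈ N
  · simp [hn]
  · rw [if_neg hn]
    simp only [Finset.mem_image]
    constructor
    · rintro ⟨y, hy, rfl⟩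
      exact ⟨rfl, hn, rfl, hy⟩
    · rintro ⟨h1, _, h2, h3⟩
      subst h1
      exact ⟨e.2.1, h3, by rw [← h2]⟩

end CHG

open Paper in
/-- if the `j`-threshold Consensus Process with noise set `N` started from all ones
has `χ_o(T) = 0` with `T ≥ 1`, then there is a history graph for `(o, T)` for the `j`-threshold
Consensus Process which is present in `χ`. -/
theorem consensus_has_present_history_graph
    {V : Type*} [Infinite V]
    (G : SimpleGraph V) [DecidableRel G.Adj] [∀ v, Fintype (G.neighborSet v)]
    (hconn : G.Connected) (Δ : ℕ) (hΔ : ∀ x, G.degree x ≤ Δ)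
    (j : ℕ) (hj1 : 1 ≤ j) (hjδ : ∀ x, j ≤ G.degree x)
    (N : Set (V × ℕ)) (hN : ∀ p ∈ N, 1 ≤ p.2)
    (o : V) (T : ℕ) (hT : 1 ≤ T)
    (h0 : consensus G j N (fun _ => true) T o = false) :
    ∃ H : HistoryGraph G j o T false,
      (∀ u ∈ H.U, consensus G j N (fun _ => true) u.2 u.1 = false) ∧
      (∀ u ∈ H.U, (u ∈ N ↔ u ∈ H.Ustar)) := by
  classical
  set U : Finset (V × ℕ) := CHG.Ufun G j N T o with hUdef
  set F : Finset ((V × ℕ) × (V × ℕ)) := U.biUnion (CHG.eout G j N) with hFdef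
  set Ustar : Finset (V × ℕ) := U.filter (· ∈ N) with hUstardef
  have hchi : CHG.chi G j N T o = false := h0
  obtain ⟨ha, hb, hc⟩ := CHG.main G j N hj1 hjδ T o hchi hT
  have memF : ∀ e, e ∈ F ↔ e.1 ∈ U ∧ CHG.Rel G j N e.1 e.2 := by
    intro e
    rw [hFdef]
    simp only [Finset.mem_biUnion, CHG.mem_eout]
    constructor
    · rintro ⟨u, hu, rfl, hr⟩; exact ⟨hu, hr⟩
    · rintro ⟨hu, hr⟩; exact ⟨e.1, hu, rfl, hr⟩
  have selAdj : ∀ u ∈ U, u ∉ N → ∀ y ∈ CHG.Sel G j N u.1 u.2, G.Adj u.1 y := by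
    intro u hu hun y hy
    obtain ⟨h1, h2, _⟩ := ha u hu
    have := (CHG.sel_spec G j N hj1 hjδ h1 (by simpa using hun) h2).1 hy
    rw [Finset.mem_filter, SimpleGraph.mem_neighborFinset] at this
    exact this.1
  refine ⟨⟨U, F, Ustar, Finset.filter_subset _ _, ?_, ?_, ?_, ?_, ?_, ?_, ?_, ?_, ?_, ?_, ?_⟩,
    ?_, ?_⟩
  · -- edge_mem_fst
    intro e he
    exact ((memF e).1 he).1
  · -- edge_mem_snd
    intro e he
    obtain ⟨hu, hn, h2, h3⟩ := (memF e).1 he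
    have := hb e.1 hu hn e.2.1 h3
    have he2 : e.2 = (e.2.1, e.1.2 - 1) := by ext <;> simp [h2]
    rw [he2]
    exact this
  · -- edge_time
    intro e he
    obtain ⟨hu, hn, h2, _⟩ := (memF e).1 he
    have := (ha e.1 hu).2.1
    omega
  · -- edge_space
    intro e he
    obtain ⟨hu, hn, _, h3⟩ := (memF e).1 he
    exact Or.inr (selAdj e.1 hu hn e.2.1 h3)
  · -- conn
    intro u hu v hv
    have key : ∀ w ∈ U, Relation.ReflTransGen
        (fun a b => (a, b) ∈ F ∨ (b, a) ∈ F) w (o, T) := by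
      intro w hw
      refine Relation.ReflTransGen.mono ?_ _ _ (hc w hw)
      rintro a b ⟨haU, hbU, hr | hr⟩
      · exact Or.inl ((memF (a, b)).2 ⟨haU, hr⟩)
      · exact Or.inr ((memF (b, a)).2 ⟨hbU, hr⟩)
    have hsym : Symmetric (fun a b : V × ℕ => (a, b) ∈ F ∨ (b, a) ∈ F) := by
      intro a b hab
      exact hab.symm
    exact (key u hu).trans ((@Relation.ReflTransGen.symmetric _ _ ⟨hsym⟩).symm _ _ (key v hv))
  · -- root_mem
    exact CHG.root_mem_Ufun G j N hT o
  · -- time_range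
    intro u hu _
    exact (ha u hu).2
  · -- time_one_star
    intro u hu h1
    rw [hUstardef, Finset.mem_filter]
    refine ⟨hu, ?_⟩
    have := (ha u hu).1
    rw [h1] at this
    have := CHG.one_in_N G j N hjδ this
    have hu1 : u = (u.1, 1) := by ext <;> simp [h1]
    rw [hu1]
    exact this
  · -- star_no_out
    intro u hu e he
    rw [hUstardef, Finset.mem_filter] at hu
    obtain ⟨_, hn, _⟩ := (memF e).1 he
    intro h
    rw [h] at hn
    exact hn hu.2
  · -- straight_count
    intro u hu hus
    have hn : u ∉ N := by
      intro h
      exact hus (by rw [hUstardef, Finset.mem_filter]; exact ⟨hu, h⟩)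
    have : (F.filter fun e => e.1 = u ∧ e.2.1 = u.1) = ∅ := by
      rw [Finset.filter_eq_empty_iff]
      rintro e he ⟨h1, h2⟩
      obtain ⟨_, _, _, h3⟩ := (memF e).1 he
      rw [h1] at h3
      have := selAdj u hu hn e.2.1 h3
      rw [h2] at this
      exact G.irrefl this
    rw [this]
    rfl
  · -- oblique_count
    intro u hu hus
    have hn : u ∉ N := by
      intro h
      exact hus (by rw [hUstardef, Finset.mem_filter]; exact ⟨hu, h⟩)
    have heq : (F.filter fun e => e.1 = u ∧ e.2.1 ≠ u.1) = CHG.eout G j N u := by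
      ext e
      rw [Finset.mem_filter, CHG.mem_eout]
      constructor
      · rintro ⟨he, h1, _⟩
        obtain ⟨_, hr⟩ := (memF e).1 he
        rw [h1] at hr
        exact ⟨h1, hr⟩
      · rintro ⟨h1, hr⟩
        have hadj := selAdj u hu hn e.2.1 hr.2.2
        refine ⟨(memF e).2 ⟨by rw [h1]; exact hu, by rw [h1]; exact hr⟩, h1, ?_⟩
        exact fun h => G.irrefl (h ▸ hadj)
    rw [heq, CHG.eout, if_neg hn]
    rw [Finset.card_image_of_injective _ (by intro a b h; simpa using h)]
    obtain ⟨h1, h2, _⟩ := ha u hu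
    exact (CHG.sel_spec G j N hj1 hjδ h1 (by simpa using hn) h2).2
  · -- present: chi false
    intro u hu
    exact (ha u hu).1
  · -- N iff Ustar
    intro u hu
    exact ⟨fun h => Finset.mem_filter.2 ⟨hu, h⟩, fun h => (Finset.mem_filter.1 h).2⟩
end
end

section
/- Let ℋ = (𝒰, ℱ, 𝒰*) be a history graph for (o,T) for either the j-threshold Consensus Process or the j-neighbour Bootstrap Percolation. Then, as an inequality of real numbers, (3·Φ_E(G) − Δ − 2j + 2)·|𝒰| + Δ − Φ_E(G) ≤ 2·(Φ_E(G) − j + 1)·|𝒰*|. -/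
open Classical
noncomputable section

section Aux
open Paper

variable {V : Type*} (G : SimpleGraph V) [DecidableRel G.Adj] [∀ v, Fintype (G.neighborSet v)]

lemma edgeExpansion_bddBelow :
    BddBelow {r : ℝ | ∃ K : Finset V, K.Nonempty ∧
      r = (edgeBoundaryCard G K : ℝ) / (K.card : ℝ)} := by
  refine ⟨0, ?_⟩
  rintro r ⟨K, hK, rfl⟩
  positivity

lemma edgeExpansion_mul_card_le (K : Finset V) :
    edgeExpansion G * K.card ≤ (edgeBoundaryCard G K : ℝ) := by
  rcases K.eq_empty_or_nonempty with h | h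
  · subst h; simp [edgeBoundaryCard]
  · have h1 : edgeExpansion G ≤ (edgeBoundaryCard G K : ℝ) / (K.card : ℝ) :=
      csInf_le (edgeExpansion_bddBelow G) ⟨K, h, rfl⟩
    have hc : (0:ℝ) < K.card := by exact_mod_cast Finset.card_pos.mpr h
    rw [le_div_iff₀ hc] at h1
    exact h1

lemma edgeExpansion_le_degree (x : V) : edgeExpansion G ≤ G.degree x := by
  have h1 : edgeExpansion G ≤ (edgeBoundaryCard G {x} : ℝ) / (({x} : Finset V).card : ℝ) :=
    csInf_le (edgeExpansion_bddBelow G) ⟨{x}, Finset.singleton_nonempty x, rfl⟩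
  have h2 : edgeBoundaryCard G {x} = G.degree x := by
    rw [edgeBoundaryCard, Finset.sum_singleton, ← SimpleGraph.card_neighborFinset_eq_degree]
    congr 1
    apply Finset.filter_true_of_mem
    intro y hy
    simp only [Finset.mem_singleton]
    rintro rfl
    exact G.irrefl ((SimpleGraph.mem_neighborFinset _ _ _).mp hy)
  rw [h2] at h1
  simpa using h1

lemma boundary_submodular (S₁ S₂ : Finset V) :
    edgeBoundaryCard G (S₁ ∩ S₂) + edgeBoundaryCard G (S₁ ∪ S₂) ≤
      (∑ x ∈ S₁, ((G.neighborFinset x).filter fun y => y ∉ S₂).card) +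
      ∑ x ∈ S₂, ((G.neighborFinset x).filter fun y => y ∉ S₁).card := by
  classical
  have key : ∀ (W S T : Finset V), S ⊆ W →
      ∑ x ∈ S, ((G.neighborFinset x).filter fun y => y ∉ T).card
      = ∑ x ∈ W, (if x ∈ S then ((G.neighborFinset x).filter fun y => y ∉ T).card else 0) := by
    intro W S T hST
    rw [Finset.sum_ite_mem, Finset.inter_comm, (Finset.inter_eq_left).mpr hST]
  rw [edgeBoundaryCard, edgeBoundaryCard,
    key (S₁ ∪ S₂) (S₁ ∩ S₂) (S₁ ∩ S₂) (Finset.inter_subset_union),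
    key (S₁ ∪ S₂) (S₁ ∪ S₂) (S₁ ∪ S₂) (subset_refl _),
    key (S₁ ∪ S₂) S₁ S₂ Finset.subset_union_left,
    key (S₁ ∪ S₂) S₂ S₁ Finset.subset_union_right,
    ← Finset.sum_add_distrib, ← Finset.sum_add_distrib]
  refine Finset.sum_le_sum fun x hx => ?_
  by_cases h1 : x ∈ S₁ <;> by_cases h2 : x ∈ S₂
  · rw [if_pos (Finset.mem_inter.mpr ⟨h1, h2⟩), if_pos (Finset.mem_union_left _ h1),
      if_pos h1, if_pos h2]
    refine le_of_eq ?_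
    rw [Finset.card_filter, Finset.card_filter, Finset.card_filter, Finset.card_filter,
      ← Finset.sum_add_distrib, ← Finset.sum_add_distrib]
    refine Finset.sum_congr rfl fun y _ => ?_
    by_cases k1 : y ∈ S₁ <;> by_cases k2 : y ∈ S₂ <;>
      simp [Finset.mem_inter, Finset.mem_union, k1, k2]
  · rw [if_neg (fun h => h2 (Finset.mem_inter.mp h).2), if_pos (Finset.mem_union_left _ h1),
      if_pos h1, if_neg h2, zero_add, add_zero]
    refine Finset.card_le_card fun y hy => ?_
    rw [Finset.mem_filter] at hy ⊢
    exact ⟨hy.1, fun h => hy.2 (Finset.mem_union_right _ h)⟩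
  · rw [if_neg (fun h => h1 (Finset.mem_inter.mp h).1), if_pos (Finset.mem_union_right _ h2),
      if_neg h1, if_pos h2, zero_add, zero_add]
    refine Finset.card_le_card fun y hy => ?_
    rw [Finset.mem_filter] at hy ⊢
    exact ⟨hy.1, fun h => hy.2 (Finset.mem_union_left _ h)⟩
  · exact absurd (Finset.mem_union.mp hx) (by simp [h1, h2])

end Aux


open Paper in
/-- the first history-graph counting inequality (Lemma 4.5, ineq. (4.3)),
valid both for the Consensus Process (`bp = false`) and for Bootstrap Percolation
(`bp = true`). -/
theorem historyGraph_edge_expansion_inequality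
    {V : Type*} [Infinite V]
    (G : SimpleGraph V) [DecidableRel G.Adj] [∀ v, Fintype (G.neighborSet v)]
    (hconn : G.Connected)
    (Δ : ℕ) (hΔ : IsLUB (Set.range fun x => G.degree x) Δ)
    (δ : ℕ) (hδ : IsGLB (Set.range fun x => G.degree x) δ)
    (j : ℕ) (hj1 : 1 ≤ j) (hjδ : j ≤ δ)
    (o : V) (T : ℕ) (bp : Bool) (H : HistoryGraph G j o T bp) :
    (3 * edgeExpansion G - Δ - 2 * j + 2) * H.U.card + Δ - edgeExpansion G ≤
      2 * (edgeExpansion G - j + 1) * H.Ustar.card := by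
  classical
  obtain ⟨x₀⟩ : Nonempty V := inferInstance
  have hdegΔ : ∀ x : V, G.degree x ≤ Δ := fun x => hΔ.1 ⟨x, rfl⟩
  have hδdeg : ∀ x : V, δ ≤ G.degree x := fun x => hδ.1 ⟨x, rfl⟩
  have hjdeg : ∀ x : V, j ≤ G.degree x := fun x => hjδ.trans (hδdeg x)
  have hΦδ : edgeExpansion G ≤ (δ : ℝ) := by
    have hne : (Set.range fun x : V => G.degree x).Nonempty := ⟨G.degree x₀, x₀, rfl⟩
    have hδeq : δ = sInf (Set.range fun x : V => G.degree x) :=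
      hδ.unique (isGLB_csInf hne (OrderBot.bddBelow _))
    obtain ⟨x, hx⟩ := Nat.sInf_mem hne
    have hdx : G.degree x = δ := by rw [← hδeq] at hx; exact hx
    have h := edgeExpansion_le_degree G x
    rw [hdx] at h
    exact h
  have hΦ0 : (0:ℝ) ≤ edgeExpansion G := by
    refine le_csInf ⟨(edgeBoundaryCard G {x₀} : ℝ) / (({x₀} : Finset V).card : ℝ),
      ⟨{x₀}, Finset.singleton_nonempty _, rfl⟩⟩ ?_
    rintro r ⟨K, hK, rfl⟩
    positivity
  have hδΔr : (δ:ℝ) ≤ (Δ:ℝ) := by exact_mod_cast (hδdeg x₀).trans (hdegΔ x₀)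
  have hΦΔ : edgeExpansion G ≤ (Δ:ℝ) := hΦδ.trans hδΔr
  set U := H.U with hU
  set Us := H.Ustar with hUs
  set NS : Finset (V × ℕ) := U.filter (fun u => u ∉ Us) with hNS
  set A : ℕ → Finset (V × ℕ) := fun t => NS.filter (fun u => u.2 = t) with hA
  set L : ℕ → Finset (V × ℕ) := fun t => U.filter (fun u => u.2 = t) with hL
  set Kt : ℕ → Finset V := fun t => (L t).image Prod.fst with hKt
  set S1 : ℕ → Finset V := fun t => (A t).image Prod.fst with hS1
  set Ft : ℕ → Finset ((V × ℕ) × (V × ℕ)) :=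
    fun t => H.F.filter (fun e => e.1.2 = t ∧ e.1.1 ≠ e.2.1) with hFt
  have memA : ∀ (t : ℕ) (u : V × ℕ), u ∈ A t ↔ ((u ∈ U ∧ u ∉ Us) ∧ u.2 = t) := by
    intro t u
    simp only [hA, hNS, Finset.mem_filter]
  have memL : ∀ (t : ℕ) (u : V × ℕ), u ∈ L t ↔ (u ∈ U ∧ u.2 = t) := by
    intro t u
    simp only [hL, Finset.mem_filter]
  have cardK : ∀ t, (Kt t).card = (L t).card := by
    intro t
    apply Finset.card_image_of_injOn
    intro u hu v hv huv
    rw [Finset.mem_coe] at hu hv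
    exact Prod.ext_iff.mpr ⟨huv, (((memL t u).mp hu).2).trans ((((memL t v).mp hv).2).symm)⟩
  have cardS1 : ∀ t, (S1 t).card = (A t).card := by
    intro t
    apply Finset.card_image_of_injOn
    intro u hu v hv huv
    rw [Finset.mem_coe] at hu hv
    exact Prod.ext_iff.mpr ⟨huv, (((memA t u).mp hu).2).trans ((((memA t v).mp hv).2).symm)⟩
  -- the per-level inequality
  have key : ∀ t' : ℕ,
      edgeExpansion G * (((A (t'+1)).card : ℝ) + ((L t').card : ℝ)) + ((Ft (t'+1)).card : ℝ) ≤
        ((j:ℝ) - 1) * ((A (t'+1)).card : ℝ) + (Δ:ℝ) * ((L t').card : ℝ) := by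
    intro t'
    have h1 : ∀ x ∈ S1 (t'+1),
        G.degree x + 1 - j ≤ ((G.neighborFinset x).filter (fun y => y ∈ Kt t')).card := by
      intro x hx
      obtain ⟨u, hu, hux⟩ := Finset.mem_image.mp (by simpa only [hS1] using hx)
      obtain ⟨⟨huU, huS⟩, hu2⟩ := (memA _ u).mp hu
      have hcard := H.oblique_count u huU huS
      rw [← hux, ← hcard]
      apply Finset.card_le_card_of_injOn (fun e => e.2.1)
      · intro e he
        rw [Finset.mem_coe, Finset.mem_filter] at he
        obtain ⟨heF, he1, hne⟩ := he
        have h2U := H.edge_mem_snd e heF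
        have htm := H.edge_time e heF
        rw [he1] at htm
        have he22 : e.2.2 = t' := by omega
        have hadj : G.Adj u.1 e.2.1 := by
          rcases H.edge_space e heF with h | h
          · rw [he1] at h; exact absurd h.symm hne
          · rw [he1] at h; exact h
        rw [Finset.mem_coe, Finset.mem_filter]
        refine ⟨(SimpleGraph.mem_neighborFinset _ _ _).mpr hadj, ?_⟩
        simp only [hKt]
        exact Finset.mem_image.mpr ⟨e.2, (memL _ _).mpr ⟨h2U, he22⟩, rfl⟩
      · intro e he f hf hef
        simp only [Finset.mem_coe, Finset.mem_filter] at he hf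
        have ht1 := H.edge_time e he.1
        have ht2 := H.edge_time f hf.1
        have h12 : e.1 = f.1 := he.2.1.trans hf.2.1.symm
        refine Prod.ext_iff.mpr ⟨h12, Prod.ext_iff.mpr ⟨hef, ?_⟩⟩
        rw [h12] at ht1
        omega
    have h2 : ∀ x ∈ S1 (t'+1),
        ((G.neighborFinset x).filter (fun y => y ∉ Kt t')).card ≤ j - 1 := by
      intro x hx
      have hge := h1 x hx
      have hsplit := Finset.card_filter_add_card_filter_not
        (s := G.neighborFinset x) (p := fun y => y ∈ Kt t')
      rw [SimpleGraph.card_neighborFinset_eq_degree] at hsplit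
      have hjx := hjdeg x
      omega
    have h3 : (Ft (t'+1)).card ≤
        ∑ y ∈ Kt t', ((G.neighborFinset y).filter (fun z => z ∈ S1 (t'+1))).card := by
      have hP : ∑ y ∈ Kt t', ((G.neighborFinset y).filter (fun z => z ∈ S1 (t'+1))).card
          = ((Kt t').biUnion (fun y => ((G.neighborFinset y).filter
              (fun z => z ∈ S1 (t'+1))).image (fun z => (y, z)))).card := by
        rw [Finset.card_biUnion]
        · exact Finset.sum_congr rfl fun y _ =>
            (Finset.card_image_of_injective _ (fun a b hab => (Prod.ext_iff.mp hab).2)).symm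
        · intro a _ b _ hab
          refine Finset.disjoint_left.mpr ?_
          rintro p hp hq
          obtain ⟨z, _, rfl⟩ := Finset.mem_image.mp hp
          obtain ⟨w, _, hw⟩ := Finset.mem_image.mp hq
          exact hab ((Prod.ext_iff.mp hw).1).symm
      rw [hP]
      apply Finset.card_le_card_of_injOn (fun e => (e.2.1, e.1.1))
      · intro e he
        simp only [hFt, Finset.mem_coe, Finset.mem_filter] at he
        obtain ⟨heF, ht1, hne⟩ := he
        have h1U := H.edge_mem_fst e heF
        have h2U := H.edge_mem_snd e heF
        have htm := H.edge_time e heF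
        have he22 : e.2.2 = t' := by omega
        have hstar : e.1 ∉ Us := fun hs => H.star_no_out e.1 hs e heF rfl
        have hadj : G.Adj e.2.1 e.1.1 := by
          rcases H.edge_space e heF with h | h
          · exact absurd h hne
          · exact h.symm
        rw [Finset.mem_coe]
        apply Finset.mem_biUnion.mpr
        refine ⟨e.2.1, ?_, ?_⟩
        · simp only [hKt]
          exact Finset.mem_image.mpr ⟨e.2, (memL _ _).mpr ⟨h2U, he22⟩, rfl⟩
        · apply Finset.mem_image.mpr
          refine ⟨e.1.1, Finset.mem_filter.mpr
            ⟨(SimpleGraph.mem_neighborFinset _ _ _).mpr hadj, ?_⟩, rfl⟩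
          simp only [hS1]
          exact Finset.mem_image.mpr ⟨e.1, (memA _ _).mpr ⟨⟨h1U, hstar⟩, ht1⟩, rfl⟩
      · intro e he f hf hef
        simp only [Finset.mem_coe, hFt, Finset.mem_filter] at he hf
        have ht1 := H.edge_time e he.1
        have ht2 := H.edge_time f hf.1
        have hee := he.2.1
        have hff := hf.2.1
        have h21 : e.2.1 = f.2.1 := (Prod.ext_iff.mp hef).1
        have h11 : e.1.1 = f.1.1 := (Prod.ext_iff.mp hef).2
        refine Prod.ext_iff.mpr ⟨Prod.ext_iff.mpr ⟨h11, ?_⟩, Prod.ext_iff.mpr ⟨h21, ?_⟩⟩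
        · rw [hee, hff]
        · omega
    have h4 : edgeExpansion G * (((S1 (t'+1)).card : ℝ) + ((Kt t').card : ℝ)) ≤
        ((∑ x ∈ S1 (t'+1), ((G.neighborFinset x).filter (fun y => y ∉ Kt t')).card : ℕ) : ℝ) +
        ((∑ y ∈ Kt t', ((G.neighborFinset y).filter (fun z => z ∉ S1 (t'+1))).card : ℕ) : ℝ) := by
      have hsub := boundary_submodular G (S1 (t'+1)) (Kt t')
      have e1 := edgeExpansion_mul_card_le G ((S1 (t'+1)) ∩ (Kt t'))
      have e2 := edgeExpansion_mul_card_le G ((S1 (t'+1)) ∪ (Kt t'))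
      have hcards : (((S1 (t'+1)) ∩ (Kt t')).card : ℝ) + (((S1 (t'+1)) ∪ (Kt t')).card : ℝ)
          = ((S1 (t'+1)).card : ℝ) + ((Kt t').card : ℝ) := by
        exact_mod_cast Finset.card_inter_add_card_union _ _
      calc edgeExpansion G * (((S1 (t'+1)).card : ℝ) + ((Kt t').card : ℝ))
          = edgeExpansion G * (((S1 (t'+1)) ∩ (Kt t')).card : ℝ)
            + edgeExpansion G * (((S1 (t'+1)) ∪ (Kt t')).card : ℝ) := by
            rw [← mul_add, hcards]
        _ ≤ ((edgeBoundaryCard G ((S1 (t'+1)) ∩ (Kt t')) : ℕ) : ℝ)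
            + ((edgeBoundaryCard G ((S1 (t'+1)) ∪ (Kt t')) : ℕ) : ℝ) := add_le_add e1 e2
        _ ≤ _ := by exact_mod_cast hsub
    have h5 : (∑ x ∈ S1 (t'+1), ((G.neighborFinset x).filter (fun y => y ∉ Kt t')).card)
        ≤ (j - 1) * (S1 (t'+1)).card := by
      calc (∑ x ∈ S1 (t'+1), ((G.neighborFinset x).filter (fun y => y ∉ Kt t')).card)
          ≤ ∑ _x ∈ S1 (t'+1), (j-1) := Finset.sum_le_sum h2
        _ = (S1 (t'+1)).card * (j-1) := by rw [Finset.sum_const, smul_eq_mul]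
        _ = (j-1) * (S1 (t'+1)).card := Nat.mul_comm _ _
    have h6 : (∑ y ∈ Kt t', ((G.neighborFinset y).filter (fun z => z ∉ S1 (t'+1))).card)
        + (Ft (t'+1)).card ≤ Δ * (Kt t').card := by
      calc (∑ y ∈ Kt t', ((G.neighborFinset y).filter (fun z => z ∉ S1 (t'+1))).card)
            + (Ft (t'+1)).card
          ≤ (∑ y ∈ Kt t', ((G.neighborFinset y).filter (fun z => z ∉ S1 (t'+1))).card)
            + ∑ y ∈ Kt t', ((G.neighborFinset y).filter (fun z => z ∈ S1 (t'+1))).card :=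
            Nat.add_le_add_left h3 _
        _ = ∑ y ∈ Kt t', G.degree y := by
            rw [← Finset.sum_add_distrib]
            refine Finset.sum_congr rfl fun y _ => ?_
            rw [Nat.add_comm]
            rw [Finset.card_filter_add_card_filter_not (p := fun z => z ∈ S1 (t'+1))]
            exact SimpleGraph.card_neighborFinset_eq_degree _ _
        _ ≤ ∑ _y ∈ Kt t', Δ := Finset.sum_le_sum fun y _ => hdegΔ y
        _ = Δ * (Kt t').card := by rw [Finset.sum_const, smul_eq_mul, Nat.mul_comm]
    have c5 : ((∑ x ∈ S1 (t'+1), ((G.neighborFinset x).filter (fun y => y ∉ Kt t')).card : ℕ) : ℝ)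
        ≤ ((j:ℝ) - 1) * ((S1 (t'+1)).card : ℝ) := by
      have hcast : (((j-1) * (S1 (t'+1)).card : ℕ) : ℝ) = ((j:ℝ)-1) * ((S1 (t'+1)).card : ℝ) := by
        rw [Nat.cast_mul, Nat.cast_sub hj1, Nat.cast_one]
      calc ((∑ x ∈ S1 (t'+1), ((G.neighborFinset x).filter (fun y => y ∉ Kt t')).card : ℕ) : ℝ)
          ≤ (((j-1) * (S1 (t'+1)).card : ℕ) : ℝ) := by exact_mod_cast h5
        _ = _ := hcast
    have c6 : ((∑ y ∈ Kt t', ((G.neighborFinset y).filter (fun z => z ∉ S1 (t'+1))).card : ℕ) : ℝ)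
        + ((Ft (t'+1)).card : ℝ) ≤ (Δ:ℝ) * ((Kt t').card : ℝ) := by
      exact_mod_cast h6
    have goalS : edgeExpansion G * (((S1 (t'+1)).card : ℝ) + ((Kt t').card : ℝ))
        + ((Ft (t'+1)).card : ℝ)
        ≤ ((j:ℝ) - 1) * ((S1 (t'+1)).card : ℝ) + (Δ:ℝ) * ((Kt t').card : ℝ) := by
      linarith [h4, c5, c6]
    rw [cardS1, cardK] at goalS
    exact goalS
  -- global summation
  have hfib : ∀ u ∈ U, u.2 ∈ Finset.range (T+1) := by
    intro u hu
    rw [Finset.mem_range]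
    by_cases h : u = (o, T)
    · subst h; exact Nat.lt_succ_self T
    · have := (H.time_range u hu h).2; omega
  have hsumU : ∑ t ∈ Finset.range (T+1), (L t).card = U.card :=
    (Finset.card_eq_sum_card_fiberwise hfib).symm
  have hfibNS : ∀ u ∈ NS, u.2 ∈ Finset.range (T+1) := by
    intro u hu
    exact hfib u (Finset.mem_filter.mp (by simpa only [hNS] using hu)).1
  have hsumNS : ∑ t ∈ Finset.range (T+1), (A t).card = NS.card :=
    (Finset.card_eq_sum_card_fiberwise hfibNS).symm
  have hA0 : A 0 = ∅ := by
    ext u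
    simp only [memA, Finset.notMem_empty, iff_false]
    rintro ⟨⟨huU, huS⟩, h0⟩
    have hroot : u = (o, T) := by
      by_contra h
      have := (H.time_range u huU h).1
      omega
    have hob := H.oblique_count u huU huS
    have hempty : (H.F.filter fun e => e.1 = u ∧ e.2.1 ≠ u.1) = ∅ := by
      ext e
      simp only [Finset.mem_filter, Finset.notMem_empty, iff_false]
      rintro ⟨heF, he1, -⟩
      have htm := H.edge_time e heF
      rw [he1] at htm
      omega
    rw [hempty, Finset.card_empty] at hob
    have := hjdeg u.1
    omega
  have hsumA : ∑ t' ∈ Finset.range T, (A (t'+1)).card = NS.card := by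
    rw [← hsumNS, Finset.sum_range_succ', hA0]
    simp
  have hsumL : (∑ t' ∈ Finset.range T, (L t').card) + (L T).card = U.card := by
    rw [← hsumU, Finset.sum_range_succ]
  have hLT : 1 ≤ (L T).card := by
    refine Finset.card_pos.mpr ⟨(o, T), ?_⟩
    exact (memL T (o,T)).mpr ⟨H.root_mem, rfl⟩
  have hNSsdiff : NS = U \ Us := by
    ext u
    simp only [hNS, Finset.mem_filter, Finset.mem_sdiff]
  have hsubUs : Us ⊆ U := H.ustar_subset
  have hUscard : Us.card ≤ U.card := Finset.card_le_card hsubUs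
  have hNScard : NS.card + Us.card = U.card := by
    rw [hNSsdiff, Finset.card_sdiff_of_subset hsubUs]
    omega
  have hWt : ∀ t' : ℕ, (∑ u ∈ A (t'+1), (G.degree u.1 + 1 - j)) ≤ (Ft (t'+1)).card := by
    intro t'
    have hdisj : ∀ u ∈ A (t'+1), ∀ v ∈ A (t'+1), u ≠ v →
        Disjoint (H.F.filter fun e => e.1 = u ∧ e.2.1 ≠ u.1)
          (H.F.filter fun e => e.1 = v ∧ e.2.1 ≠ v.1) := by
      intro u _ v _ huv
      refine Finset.disjoint_left.mpr fun e he1 he2 => ?_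
      rw [Finset.mem_filter] at he1 he2
      exact huv (he1.2.1.symm.trans he2.2.1)
    calc (∑ u ∈ A (t'+1), (G.degree u.1 + 1 - j))
        = ∑ u ∈ A (t'+1), (H.F.filter fun e => e.1 = u ∧ e.2.1 ≠ u.1).card := by
          refine Finset.sum_congr rfl fun u hu => ?_
          obtain ⟨⟨huU, huS⟩, -⟩ := (memA _ u).mp hu
          exact (H.oblique_count u huU huS).symm
      _ = ((A (t'+1)).biUnion fun u => H.F.filter fun e => e.1 = u ∧ e.2.1 ≠ u.1).card :=
          (Finset.card_biUnion hdisj).symm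
      _ ≤ (Ft (t'+1)).card := by
          apply Finset.card_le_card
          intro e he
          obtain ⟨u, hu, he⟩ := Finset.mem_biUnion.mp he
          rw [Finset.mem_filter] at he
          obtain ⟨heF, he1, hne⟩ := he
          obtain ⟨-, hu2⟩ := (memA _ u).mp hu
          simp only [hFt, Finset.mem_filter]
          refine ⟨heF, by rw [he1]; exact hu2, ?_⟩
          intro h
          exact hne (h.symm.trans (by rw [he1]))
  have hWsum : (∑ u ∈ NS, (G.degree u.1 + 1 - j)) ≤ ∑ t' ∈ Finset.range T, (Ft (t'+1)).card := by
    have hfw : ∑ t ∈ Finset.range (T+1), ∑ u ∈ A t, (G.degree u.1 + 1 - j)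
        = ∑ u ∈ NS, (G.degree u.1 + 1 - j) :=
      Finset.sum_fiberwise_of_maps_to hfibNS _
    rw [← hfw, Finset.sum_range_succ', hA0]
    simp only [Finset.sum_empty, add_zero]
    exact Finset.sum_le_sum fun t' _ => hWt t'
  have hWlow : (δ + 1 - j) * NS.card ≤ ∑ u ∈ NS, (G.degree u.1 + 1 - j) := by
    calc (δ + 1 - j) * NS.card = ∑ _u ∈ NS, (δ + 1 - j) := by
          rw [Finset.sum_const, smul_eq_mul, Nat.mul_comm]
      _ ≤ _ := Finset.sum_le_sum fun u _ => by have := hδdeg u.1; omega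
  -- assemble in ℝ
  have c1 : ∑ t' ∈ Finset.range T, ((A (t'+1)).card : ℝ) = (NS.card : ℝ) := by
    exact_mod_cast hsumA
  have c2 : ∑ t' ∈ Finset.range T, ((L t').card : ℝ) = (U.card : ℝ) - ((L T).card : ℝ) := by
    have h := hsumL
    have h' : (∑ t' ∈ Finset.range T, ((L t').card : ℝ)) + ((L T).card : ℝ) = (U.card : ℝ) := by
      exact_mod_cast h
    linarith
  have c3 : ((∑ u ∈ NS, (G.degree u.1 + 1 - j) : ℕ) : ℝ)
      ≤ ∑ t' ∈ Finset.range T, ((Ft (t'+1)).card : ℝ) := by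
    exact_mod_cast hWsum
  have hkeysum : edgeExpansion G * ((NS.card : ℝ) + ((U.card : ℝ) - ((L T).card : ℝ)))
      + ((∑ u ∈ NS, (G.degree u.1 + 1 - j) : ℕ) : ℝ)
      ≤ ((j:ℝ) - 1) * (NS.card : ℝ) + (Δ:ℝ) * ((U.card : ℝ) - ((L T).card : ℝ)) := by
    have hs : ∑ t' ∈ Finset.range T,
          (edgeExpansion G * (((A (t'+1)).card : ℝ) + ((L t').card : ℝ)) + ((Ft (t'+1)).card : ℝ))
        ≤ ∑ t' ∈ Finset.range T,
          (((j:ℝ) - 1) * ((A (t'+1)).card : ℝ) + (Δ:ℝ) * ((L t').card : ℝ)) :=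
      Finset.sum_le_sum fun t' _ => key t'
    have hL1 : ∑ t' ∈ Finset.range T,
          (edgeExpansion G * (((A (t'+1)).card : ℝ) + ((L t').card : ℝ)) + ((Ft (t'+1)).card : ℝ))
        = edgeExpansion G * ((NS.card : ℝ) + ((U.card : ℝ) - ((L T).card : ℝ)))
          + ∑ t' ∈ Finset.range T, ((Ft (t'+1)).card : ℝ) := by
      rw [Finset.sum_add_distrib, ← Finset.mul_sum, Finset.sum_add_distrib, c1, c2]
    have hR1 : ∑ t' ∈ Finset.range T,
          (((j:ℝ) - 1) * ((A (t'+1)).card : ℝ) + (Δ:ℝ) * ((L t').card : ℝ))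
        = ((j:ℝ) - 1) * (NS.card : ℝ) + (Δ:ℝ) * ((U.card : ℝ) - ((L T).card : ℝ)) := by
      rw [Finset.sum_add_distrib, ← Finset.mul_sum, ← Finset.mul_sum, c1, c2]
    rw [hL1, hR1] at hs
    linarith [c3, hs]
  have P2 : ((δ:ℝ) + 1 - (j:ℝ)) * (NS.card : ℝ)
      ≤ ((∑ u ∈ NS, (G.degree u.1 + 1 - j) : ℕ) : ℝ) := by
    calc ((δ:ℝ) + 1 - (j:ℝ)) * (NS.card : ℝ) = (((δ + 1 - j) * NS.card : ℕ) : ℝ) := by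
          rw [Nat.cast_mul, Nat.cast_sub (by omega : j ≤ δ + 1)]
          push_cast
          ring
      _ ≤ _ := by exact_mod_cast hWlow
  have hnsr : (NS.card : ℝ) = (U.card : ℝ) - (Us.card : ℝ) := by
    have h : ((NS.card : ℕ) : ℝ) + ((Us.card : ℕ) : ℝ) = ((U.card : ℕ) : ℝ) := by
      exact_mod_cast hNScard
    linarith
  have hsr : (Us.card : ℝ) ≤ (U.card : ℝ) := by exact_mod_cast hUscard
  have hltr : (1:ℝ) ≤ ((L T).card : ℝ) := by exact_mod_cast hLT
  have P3 : edgeExpansion G * ((U.card : ℝ) - (Us.card : ℝ))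
      ≤ (δ:ℝ) * ((U.card : ℝ) - (Us.card : ℝ)) :=
    mul_le_mul_of_nonneg_right hΦδ (by linarith)
  have P4 : edgeExpansion G * (((L T).card : ℝ) - 1) ≤ (Δ:ℝ) * (((L T).card : ℝ) - 1) :=
    mul_le_mul_of_nonneg_right hΦΔ (by linarith)
  rw [hnsr] at hkeysum P2
  nlinarith [hkeysum, P2, P3, P4]
end
end

section
/- Assume G is bipartite and let ℋ = (𝒰, ℱ, 𝒰*) be a history graph for (o,T) for the j-threshold Consensus Process. Then, as an inequality of real numbers, 2·(Φ_E(G) − j + 1)·|𝒰| + δ − Φ_E(G) ≤ (Φ_E(G) + Δ − 2j + 2)·|𝒰*|. -/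
open Classical
noncomputable section

namespace Paper

lemma aux_sum_adj_comm (G : SimpleGraph V) [DecidableRel G.Adj] (P Q : Finset V) :
    ∑ x ∈ P, (Q.filter (G.Adj x)).card = ∑ y ∈ Q, (P.filter (G.Adj y)).card := by
  classical
  simp only [Finset.card_filter]
  rw [Finset.sum_comm]
  apply Finset.sum_congr rfl
  intro y _
  apply Finset.sum_congr rfl
  intro x _
  simp [G.adj_comm]

lemma aux_bddBelow (G : SimpleGraph V) [DecidableRel G.Adj] [∀ v, Fintype (G.neighborSet v)] :
    ∀ r ∈ {r : ℝ | ∃ K : Finset V, K.Nonempty ∧ r = (edgeBoundaryCard G K : ℝ) / (K.card : ℝ)},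
      (0:ℝ) ≤ r := by
  rintro r ⟨K, hK, rfl⟩
  positivity

lemma aux_phi_mul_le (G : SimpleGraph V) [DecidableRel G.Adj] [∀ v, Fintype (G.neighborSet v)]
    (K : Finset V) (hK : K.Nonempty) :
    edgeExpansion G * K.card ≤ (edgeBoundaryCard G K : ℝ) := by
  have hcard : (0:ℝ) < K.card := by exact_mod_cast Finset.card_pos.mpr hK
  have h1 : edgeExpansion G ≤ (edgeBoundaryCard G K : ℝ) / K.card :=
    csInf_le ⟨0, aux_bddBelow G⟩ ⟨K, hK, rfl⟩
  calc edgeExpansion G * K.card ≤ ((edgeBoundaryCard G K : ℝ) / K.card) * K.card :=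
        mul_le_mul_of_nonneg_right h1 hcard.le
    _ = edgeBoundaryCard G K := by field_simp

lemma aux_phi_le_degree (G : SimpleGraph V) [DecidableRel G.Adj] [∀ v, Fintype (G.neighborSet v)]
    (x : V) : edgeExpansion G ≤ G.degree x := by
  classical
  have hb : edgeBoundaryCard G {x} = G.degree x := by
    rw [edgeBoundaryCard, Finset.sum_singleton]
    rw [Finset.filter_true_of_mem, SimpleGraph.card_neighborFinset_eq_degree]
    intro y hy
    simp only [Finset.mem_singleton]
    rintro rfl
    exact G.irrefl ((SimpleGraph.mem_neighborFinset _ _ _).mp hy)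
  have h2 : ((edgeBoundaryCard G {x} : ℝ) / (({x} : Finset V).card : ℝ)) = G.degree x := by
    simp [hb]
  calc edgeExpansion G ≤ (edgeBoundaryCard G {x} : ℝ) / (({x} : Finset V).card : ℝ) :=
        csInf_le ⟨0, aux_bddBelow G⟩ ⟨{x}, Finset.singleton_nonempty x, rfl⟩
    _ = G.degree x := h2

lemma aux_phi_nonneg (G : SimpleGraph V) [DecidableRel G.Adj] [∀ v, Fintype (G.neighborSet v)]
    [Nonempty V] : 0 ≤ edgeExpansion G := by
  classical
  refine le_csInf ⟨_, Set.mem_setOf.mpr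
    ⟨{Classical.arbitrary V}, Finset.singleton_nonempty _, rfl⟩⟩ ?_
  exact aux_bddBelow G

end Paper

open Paper in
/-- the improved history-graph inequality (Lemma 4.5, ineq. (4.4)) for the
Consensus Process on a bipartite graph. -/
theorem historyGraph_edge_expansion_inequality_CP_bipartite
    {V : Type*} [Infinite V]
    (G : SimpleGraph V) [DecidableRel G.Adj] [∀ v, Fintype (G.neighborSet v)]
    (hconn : G.Connected) (hbip : G.Colorable 2)
    (Δ : ℕ) (hΔ : IsLUB (Set.range fun x => G.degree x) Δ)
    (δ : ℕ) (hδ : IsGLB (Set.range fun x => G.degree x) δ)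
    (j : ℕ) (hj1 : 1 ≤ j) (hjδ : j ≤ δ)
    (o : V) (T : ℕ) (H : HistoryGraph G j o T false) :
    2 * (edgeExpansion G - j + 1) * H.U.card + δ - edgeExpansion G ≤
      (edgeExpansion G + Δ - 2 * j + 2) * H.Ustar.card := by
  classical
  have hub : ∀ x, G.degree x ≤ Δ := fun x => hΔ.1 ⟨x, rfl⟩
  have hlb : ∀ x, δ ≤ G.degree x := fun x => hδ.1 ⟨x, rfl⟩
  have hjdeg : ∀ x, j ≤ G.degree x := fun x => hjδ.trans (hlb x)
  obtain ⟨x₀, hx₀⟩ : δ ∈ Set.range (fun x => G.degree x) := by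
    have hne : (Set.range fun x => G.degree x).Nonempty := ⟨_, ⟨Classical.arbitrary V, rfl⟩⟩
    have h1 : IsGLB (Set.range fun x => G.degree x) (sInf (Set.range fun x => G.degree x)) :=
      isGLB_csInf hne (OrderBot.bddBelow _)
    rw [hδ.unique h1]
    exact Nat.sInf_mem hne
  have hΦδ : edgeExpansion G ≤ (δ : ℝ) := by
    have h := aux_phi_le_degree G x₀
    have hx : G.degree x₀ = δ := hx₀
    rwa [hx] at h
  have hδΔ : (δ : ℝ) ≤ (Δ : ℝ) := by
    have hx : G.degree x₀ = δ := hx₀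
    exact_mod_cast hx ▸ hub x₀
  have hΦ0 : (0:ℝ) ≤ edgeExpansion G := aux_phi_nonneg G
  rcases Nat.eq_zero_or_pos T with hT0 | hT1
  · -- degenerate case T = 0
    subst hT0
    have hUeq : H.U = {(o, 0)} := by
      apply Finset.eq_singleton_iff_unique_mem.mpr
      refine ⟨H.root_mem, fun u hu => ?_⟩
      by_contra hne
      have := H.time_range u hu hne
      omega
    have hstar : (o, 0) ∈ H.Ustar := by
      by_contra hns
      have hc := H.oblique_count (o, 0) H.root_mem hns
      have hemp : H.F.filter
          (fun e => e.1 = ((o, 0) : V × ℕ) ∧ e.2.1 ≠ ((o, 0) : V × ℕ).1) = ∅ := by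
        rw [Finset.filter_eq_empty_iff]
        rintro e he ⟨he1, -⟩
        have h2 : e.2 = ((o, 0) : V × ℕ) := by
          have := H.edge_mem_snd e he
          rw [hUeq] at this
          exact Finset.mem_singleton.mp this
        have h3 := H.edge_time e he
        rw [he1, h2] at h3
        simp at h3
      rw [hemp] at hc
      have := hjdeg o
      simp at hc
      omega
    have hUs : H.Ustar = {(o, 0)} := by
      refine subset_antisymm (hUeq ▸ H.ustar_subset) (Finset.singleton_subset_iff.mpr hstar)
    rw [hUeq, hUs]
    simp only [Finset.card_singleton, Nat.cast_one]
    linarith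
  · -- main case 1 ≤ T
    set W : Finset (V × ℕ) := H.U \ H.Ustar with hWdef
    obtain ⟨C⟩ := hbip
    set c : V → ZMod 2 := fun x => ((C x).val : ZMod 2) with hcdef
    have hc : ∀ {x y : V}, G.Adj x y → c x = c y + 1 := by
      intro x y hxy
      have hne : (C x).val ≠ (C y).val := fun h => C.valid hxy (Fin.val_injective h)
      have hx2 : (C x).val < 2 := (C x).2
      have hy2 : (C y).val < 2 := (C y).2
      have : (C x).val = 0 ∧ (C y).val = 1 ∨ (C x).val = 1 ∧ (C y).val = 0 := by omega
      rcases this with ⟨h1, h2⟩ | ⟨h1, h2⟩ <;> simp [hcdef, h1, h2] <;> decide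
    have hcne : ∀ {x y : V}, G.Adj x y → c x ≠ c y := by
      intro x y hxy heq
      have h1 := hc hxy
      rw [heq] at h1
      have : (1 : ZMod 2) = 0 := by linear_combination - h1
      exact absurd this (by decide)
    have hobl : ∀ e ∈ H.F, G.Adj e.1.1 e.2.1 ∧ e.1.2 = e.2.2 + 1 ∧ e.2 ∈ H.U := by
      intro e he
      have h1 := H.edge_mem_fst e he
      have hns : e.1 ∉ H.Ustar := fun hstar => H.star_no_out e.1 hstar e he rfl
      have hsc := H.straight_count e.1 h1 hns
      simp only [cond_false] at hsc
      have hne : e.2.1 ≠ e.1.1 := by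
        intro heq
        have hmem : e ∈ H.F.filter (fun e' => e'.1 = e.1 ∧ e'.2.1 = e.1.1) :=
          Finset.mem_filter.mpr ⟨he, rfl, heq⟩
        have := Finset.card_pos.mpr ⟨e, hmem⟩
        omega
      rcases H.edge_space e he with h | h
      · exact absurd h.symm hne
      · exact ⟨h, H.edge_time e he, H.edge_mem_snd e he⟩
    have htwo : (2 : ZMod 2) = 0 := by decide
    have hstep : ∀ a b : V × ℕ, ((a, b) ∈ H.F ∨ (b, a) ∈ H.F) →
        c a.1 + (a.2 : ZMod 2) = c b.1 + (b.2 : ZMod 2) := by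
      have one : ∀ p q : V × ℕ, (p, q) ∈ H.F →
          c p.1 + (p.2 : ZMod 2) = c q.1 + (q.2 : ZMod 2) := by
        intro p q hpq
        obtain ⟨hadj, htime, -⟩ := hobl (p, q) hpq
        have h1 : c p.1 = c q.1 + 1 := hc hadj
        have h2 : ((p.2 : ℕ) : ZMod 2) = (q.2 : ZMod 2) + 1 := by
          rw [htime]; push_cast; ring
        rw [h1, h2]
        linear_combination htwo
      rintro a b (h | h)
      · exact one a b h
      · exact (one b a h).symm
    have hpar : ∀ u ∈ H.U, ∀ v ∈ H.U,
        c u.1 + (u.2 : ZMod 2) = c v.1 + (v.2 : ZMod 2) := by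
      intro u hu v hv
      have hconn' := H.conn u hu v hv
      clear hv
      induction hconn' with
      | refl => rfl
      | tail _ hbc ih => exact ih.trans (hstep _ _ hbc)
    have hsame : ∀ u ∈ H.U, ∀ v ∈ H.U, u.2 = v.2 → c u.1 = c v.1 := by
      intro u hu v hv h2
      have h := hpar u hu v hv
      rw [h2] at h
      exact add_right_cancel h
    have hdiffc : ∀ u ∈ H.U, ∀ v ∈ H.U, u.2 = v.2 + 1 → c u.1 ≠ c v.1 := by
      intro u hu v hv h2 heq
      have h := hpar u hu v hv
      rw [h2, heq] at h
      push_cast at h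
      have : (1 : ZMod 2) = 0 := by linear_combination h
      exact absurd this (by decide)
    have hTime : ∀ u ∈ H.U, 1 ≤ u.2 ∧ u.2 ≤ T := by
      intro u hu
      by_cases h : u = (o, T)
      · rw [h]; exact ⟨hT1, le_refl T⟩
      · exact H.time_range u hu h
    have hWtime : ∀ u ∈ W, 2 ≤ u.2 ∧ u.2 ≤ T := by
      intro u hu
      obtain ⟨huU, hus⟩ := Finset.mem_sdiff.mp hu
      have h1 := hTime u huU
      rcases Nat.lt_or_ge u.2 2 with h | h
      · have h2 : u.2 = 1 := by omega
        exact absurd (H.time_one_star u huU h2) hus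
      · exact ⟨h, h1.2⟩
    have slice : ∀ t : ℕ,
        edgeExpansion G * (((W.filter (fun u => u.2 = t + 1)).card : ℝ) +
            ((H.U.filter (fun u => u.2 = t)).card : ℝ)) ≤
          (∑ u ∈ W.filter (fun u => u.2 = t + 1), (G.degree u.1 : ℝ)) +
          (∑ u ∈ H.U.filter (fun u => u.2 = t), (G.degree u.1 : ℝ)) -
          2 * ∑ u ∈ W.filter (fun u => u.2 = t + 1), ((G.degree u.1 : ℝ) + 1 - (j : ℝ)) := by
      intro t
      set Wt := W.filter (fun u => u.2 = t + 1) with hWtdef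
      set Ut := H.U.filter (fun u => u.2 = t) with hUtdef
      have hWtU : ∀ u ∈ Wt, u ∈ H.U ∧ u ∉ H.Ustar ∧ u.2 = t + 1 := by
        intro u hu
        obtain ⟨h1, h2⟩ := Finset.mem_filter.mp hu
        obtain ⟨h3, h4⟩ := Finset.mem_sdiff.mp h1
        exact ⟨h3, h4, h2⟩
      have hUtU : ∀ u ∈ Ut, u ∈ H.U ∧ u.2 = t := fun u hu => Finset.mem_filter.mp hu
      set B := Wt.image Prod.fst with hBdef
      set A := Ut.image Prod.fst with hAdef
      have hinjW : Set.InjOn Prod.fst (Wt : Set (V × ℕ)) := by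
        intro u hu v hv h
        exact Prod.ext h (by
          rw [(hWtU u (Finset.mem_coe.mp hu)).2.2, (hWtU v (Finset.mem_coe.mp hv)).2.2])
      have hinjU : Set.InjOn Prod.fst (Ut : Set (V × ℕ)) := by
        intro u hu v hv h
        exact Prod.ext h (by
          rw [(hUtU u (Finset.mem_coe.mp hu)).2, (hUtU v (Finset.mem_coe.mp hv)).2])
      have hBcard : B.card = Wt.card := Finset.card_image_of_injOn hinjW
      have hAcard : A.card = Ut.card := Finset.card_image_of_injOn hinjU
      have hBsum : ∀ g : V → ℝ, ∑ x ∈ B, g x = ∑ u ∈ Wt, g u.1 := fun g =>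
        Finset.sum_image fun x hx y hy h => hinjW hx hy h
      have hAsum : ∀ g : V → ℝ, ∑ x ∈ A, g x = ∑ u ∈ Ut, g u.1 := fun g =>
        Finset.sum_image fun x hx y hy h => hinjU hx hy h
      have hBmem : ∀ x ∈ B, (x, t + 1) ∈ H.U ∧ (x, t + 1) ∉ H.Ustar ∧ (x, t + 1) ∈ Wt := by
        intro x hx
        obtain ⟨u, hu, hux⟩ := Finset.mem_image.mp hx
        have h := hWtU u hu
        have heq : (x, t + 1) = u := by rw [← hux]; exact Prod.ext rfl h.2.2.symm
        rw [heq]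
        exact ⟨h.1, h.2.1, hu⟩
      have hAmem : ∀ x ∈ A, (x, t) ∈ H.U ∧ (x, t) ∈ Ut := by
        intro x hx
        obtain ⟨u, hu, hux⟩ := Finset.mem_image.mp hx
        have h := hUtU u hu
        have heq : (x, t) = u := by rw [← hux]; exact Prod.ext rfl h.2.symm
        rw [heq]
        exact ⟨h.1, hu⟩
      have hcB : ∀ x ∈ B, ∀ y ∈ B, c x = c y := by
        intro x hx y hy
        exact hsame (x, t + 1) (hBmem x hx).1 (y, t + 1) (hBmem y hy).1 rfl
      have hcA : ∀ x ∈ A, ∀ y ∈ A, c x = c y := by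
        intro x hx y hy
        exact hsame (x, t) (hAmem x hx).1 (y, t) (hAmem y hy).1 rfl
      have hcBA : ∀ x ∈ B, ∀ y ∈ A, c x ≠ c y := by
        intro x hx y hy
        exact hdiffc (x, t + 1) (hBmem x hx).1 (y, t) (hAmem y hy).1 rfl
      have hdisj : Disjoint B A := by
        rw [Finset.disjoint_left]
        intro x hxB hxA
        exact hcBA x hxB x hxA rfl
      set K := B ∪ A with hKdef
      have hK1 : edgeExpansion G * (K.card : ℝ) ≤ (edgeBoundaryCard G K : ℝ) := by
        rcases Finset.eq_empty_or_nonempty K with h | h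
        · simp [h, edgeBoundaryCard]
        · exact aux_phi_mul_le G K h
      have hNinB : ∀ x ∈ B, (G.neighborFinset x).filter (fun y => y ∈ K) =
          A.filter (G.Adj x) := by
        intro x hx
        ext y
        simp only [Finset.mem_filter, SimpleGraph.mem_neighborFinset, hKdef,
          Finset.mem_union]
        constructor
        · rintro ⟨hadj, hy | hy⟩
          · exact absurd (hcB x hx y hy) (hcne hadj)
          · exact ⟨hy, hadj⟩
        · rintro ⟨hy, hadj⟩
          exact ⟨hadj, Or.inr hy⟩
      have hNinA : ∀ x ∈ A, (G.neighborFinset x).filter (fun y => y ∈ K) =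
          B.filter (G.Adj x) := by
        intro x hx
        ext y
        simp only [Finset.mem_filter, SimpleGraph.mem_neighborFinset, hKdef,
          Finset.mem_union]
        constructor
        · rintro ⟨hadj, hy | hy⟩
          · exact ⟨hy, hadj⟩
          · exact absurd (hcA x hx y hy) (hcne hadj)
        · rintro ⟨hy, hadj⟩
          exact ⟨hadj, Or.inl hy⟩
      have hbound : ∀ x ∈ K, (((G.neighborFinset x).filter (fun y => y ∉ K)).card : ℝ)
          = (G.degree x : ℝ) - ((G.neighborFinset x).filter (fun y => y ∈ K)).card := by
        intro x _
        have h1 := Finset.card_filter_add_card_filter_not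
          (s := G.neighborFinset x) (p := fun y => y ∈ K)
        rw [SimpleGraph.card_neighborFinset_eq_degree] at h1
        have h2 : (((G.neighborFinset x).filter (fun y => y ∈ K)).card : ℝ) +
            ((G.neighborFinset x).filter (fun y => ¬ y ∈ K)).card = (G.degree x : ℝ) := by
          exact_mod_cast congrArg (Nat.cast : ℕ → ℝ) h1
        linarith
      have hEB : (edgeBoundaryCard G K : ℝ) =
          (∑ x ∈ B, ((G.degree x : ℝ) - ((A.filter (G.Adj x)).card : ℝ))) +
          ∑ x ∈ A, ((G.degree x : ℝ) - ((B.filter (G.Adj x)).card : ℝ)) := by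
        have h0 : (edgeBoundaryCard G K : ℝ) =
            ∑ x ∈ K, (((G.neighborFinset x).filter (fun y => y ∉ K)).card : ℝ) := by
          rw [edgeBoundaryCard]
          push_cast
          rfl
        rw [h0, Finset.sum_congr rfl hbound, Finset.sum_union hdisj]
        congr 1
        · exact Finset.sum_congr rfl fun x hx => by rw [hNinB x hx]
        · exact Finset.sum_congr rfl fun x hx => by rw [hNinA x hx]
      have hdc : ∑ x ∈ A, ((B.filter (G.Adj x)).card : ℝ) =
          ∑ x ∈ B, ((A.filter (G.Adj x)).card : ℝ) := by
        exact_mod_cast congrArg (Nat.cast : ℕ → ℝ) (aux_sum_adj_comm G A B)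
      have hlow : ∀ x ∈ B, (G.degree x : ℝ) + 1 - (j : ℝ) ≤ ((A.filter (G.Adj x)).card : ℝ) := by
        intro x hx
        obtain ⟨hxU, hxns, -⟩ := hBmem x hx
        have hcount := H.oblique_count (x, t + 1) hxU hxns
        set Fe := H.F.filter
          (fun e => e.1 = ((x, t + 1) : V × ℕ) ∧ e.2.1 ≠ ((x, t + 1) : V × ℕ).1) with hFedef
        have hmap : ∀ e ∈ Fe, e.2.1 ∈ A.filter (G.Adj x) := by
          intro e he
          obtain ⟨heF, he1, hne⟩ := Finset.mem_filter.mp he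
          obtain ⟨hadj, htime, he2U⟩ := hobl e heF
          rw [he1] at hadj htime
          have he22 : e.2.2 = t := by omega
          refine Finset.mem_filter.mpr ⟨?_, hadj⟩
          exact Finset.mem_image.mpr ⟨e.2, Finset.mem_filter.mpr ⟨he2U, he22⟩, rfl⟩
        have hinj : Set.InjOn (fun e => e.2.1) (Fe : Set ((V × ℕ) × (V × ℕ))) := by
          intro e he e' he' heq
          obtain ⟨heF, he1, -⟩ := Finset.mem_filter.mp (Finset.mem_coe.mp he)
          obtain ⟨heF', he1', -⟩ := Finset.mem_filter.mp (Finset.mem_coe.mp he')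
          obtain ⟨-, htime, -⟩ := hobl e heF
          obtain ⟨-, htime', -⟩ := hobl e' heF'
          rw [he1] at htime
          rw [he1'] at htime'
          have h22 : e.2.2 = e'.2.2 := by omega
          have h2 : e.2 = e'.2 := Prod.ext heq h22
          exact Prod.ext (he1.trans he1'.symm) h2
        have hle := Finset.card_le_card_of_injOn _ hmap hinj
        rw [hcount] at hle
        have hjx : j ≤ G.degree x + 1 := by have := hjdeg x; omega
        have hcast : ((G.degree x + 1 - j : ℕ) : ℝ) = (G.degree x : ℝ) + 1 - j := by
          rw [Nat.cast_sub hjx]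
          push_cast
          ring
        calc (G.degree x : ℝ) + 1 - (j : ℝ) = ((G.degree x + 1 - j : ℕ) : ℝ) := hcast.symm
          _ ≤ ((A.filter (G.Adj x)).card : ℝ) := by exact_mod_cast hle
      have hlowsum := Finset.sum_le_sum hlow
      have hKcard : (K.card : ℝ) = (Wt.card : ℝ) + (Ut.card : ℝ) := by
        rw [hKdef, Finset.card_union_of_disjoint hdisj, hBcard, hAcard]
        push_cast
        ring
      calc edgeExpansion G * ((Wt.card : ℝ) + (Ut.card : ℝ))
          = edgeExpansion G * (K.card : ℝ) := by rw [hKcard]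
        _ ≤ (edgeBoundaryCard G K : ℝ) := hK1
        _ = (∑ x ∈ B, (G.degree x : ℝ)) + (∑ x ∈ A, (G.degree x : ℝ)) -
            (∑ x ∈ B, ((A.filter (G.Adj x)).card : ℝ)) -
            ∑ x ∈ A, ((B.filter (G.Adj x)).card : ℝ) := by
            rw [hEB, Finset.sum_sub_distrib, Finset.sum_sub_distrib]
            ring
        _ = (∑ x ∈ B, (G.degree x : ℝ)) + (∑ x ∈ A, (G.degree x : ℝ)) -
            2 * ∑ x ∈ B, ((A.filter (G.Adj x)).card : ℝ) := by rw [hdc]; ring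
        _ ≤ (∑ x ∈ B, (G.degree x : ℝ)) + (∑ x ∈ A, (G.degree x : ℝ)) -
            2 * ∑ x ∈ B, ((G.degree x : ℝ) + 1 - (j : ℝ)) := by linarith
        _ = (∑ u ∈ Wt, (G.degree u.1 : ℝ)) + (∑ u ∈ Ut, (G.degree u.1 : ℝ)) -
            2 * ∑ u ∈ Wt, ((G.degree u.1 : ℝ) + 1 - (j : ℝ)) := by
            rw [hBsum, hAsum, hBsum]
    -- summation identities
    have hsum1 : ∀ f : V × ℕ → ℝ,
        ∑ t ∈ Finset.Icc 1 (T - 1), ∑ u ∈ H.U.filter (fun u => u.2 = t), f u =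
          ∑ u ∈ H.U.filter (fun u => u.2 ≠ T), f u := by
      intro f
      have hmaps : ∀ u ∈ H.U.filter (fun u => u.2 ≠ T), u.2 ∈ Finset.Icc 1 (T - 1) := by
        intro u hu
        obtain ⟨h1, h2⟩ := Finset.mem_filter.mp hu
        have := hTime u h1
        rw [Finset.mem_Icc]
        omega
      rw [← Finset.sum_fiberwise_of_maps_to hmaps f]
      apply Finset.sum_congr rfl
      intro t ht
      have ht' := Finset.mem_Icc.mp ht
      apply Finset.sum_congr ?_ fun _ _ => rfl
      rw [Finset.filter_filter]
      apply Finset.filter_congr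
      intro u hu
      have := hTime u hu
      omega
    have hsum2 : ∀ f : V × ℕ → ℝ,
        ∑ t ∈ Finset.Icc 1 (T - 1), ∑ u ∈ W.filter (fun u => u.2 = t + 1), f u =
          ∑ u ∈ W, f u := by
      intro f
      have hmaps : ∀ u ∈ W, u.2 - 1 ∈ Finset.Icc 1 (T - 1) := by
        intro u hu
        have := hWtime u hu
        rw [Finset.mem_Icc]
        omega
      rw [← Finset.sum_fiberwise_of_maps_to hmaps f]
      apply Finset.sum_congr rfl
      intro t ht
      apply Finset.sum_congr ?_ fun _ _ => rfl
      apply Finset.filter_congr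
      intro u hu
      have := hWtime u hu
      omega
    have hsummed := Finset.sum_le_sum (fun t (_ : t ∈ Finset.Icc 1 (T - 1)) => slice t)
    have hcard_as_sum : ∀ S : Finset (V × ℕ), ((S.card : ℝ)) = ∑ u ∈ S, (1 : ℝ) := by
      intro S
      rw [Finset.sum_const, nsmul_eq_mul, mul_one]
    have hLHS : ∑ t ∈ Finset.Icc 1 (T - 1),
        edgeExpansion G * (((W.filter (fun u => u.2 = t + 1)).card : ℝ) +
          ((H.U.filter (fun u => u.2 = t)).card : ℝ)) =
        edgeExpansion G * (((W.card : ℝ)) + ((H.U.filter (fun u => u.2 ≠ T)).card : ℝ)) := by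
      rw [← Finset.mul_sum]
      congr 1
      rw [Finset.sum_add_distrib]
      congr 1
      · rw [hcard_as_sum W, ← hsum2 (fun _ => (1 : ℝ))]
        exact Finset.sum_congr rfl fun t _ => (hcard_as_sum _)
      · rw [hcard_as_sum, ← hsum1 (fun _ => (1 : ℝ))]
        exact Finset.sum_congr rfl fun t _ => (hcard_as_sum _)
    have hRHS : ∑ t ∈ Finset.Icc 1 (T - 1),
        ((∑ u ∈ W.filter (fun u => u.2 = t + 1), (G.degree u.1 : ℝ)) +
          (∑ u ∈ H.U.filter (fun u => u.2 = t), (G.degree u.1 : ℝ)) -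
          2 * ∑ u ∈ W.filter (fun u => u.2 = t + 1), ((G.degree u.1 : ℝ) + 1 - (j : ℝ))) =
        (∑ u ∈ W, (G.degree u.1 : ℝ)) +
          (∑ u ∈ H.U.filter (fun u => u.2 ≠ T), (G.degree u.1 : ℝ)) -
          2 * ∑ u ∈ W, ((G.degree u.1 : ℝ) + 1 - (j : ℝ)) := by
      rw [Finset.sum_sub_distrib, Finset.sum_add_distrib, hsum2, hsum1, ← Finset.mul_sum,
        hsum2]
    rw [hLHS, hRHS] at hsummed
    -- global bookkeeping
    have hWsubU : W ⊆ H.U := Finset.sdiff_subset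
    have hr1 : (W.card : ℝ) = (H.U.card : ℝ) - (H.Ustar.card : ℝ) := by
      rw [hWdef, Finset.cast_card_sdiff H.ustar_subset]
    have hr2 : ((H.U.filter (fun u => u.2 ≠ T)).card : ℝ) +
        ((H.U.filter (fun u => u.2 = T)).card : ℝ) = (H.U.card : ℝ) := by
      have := Finset.card_filter_add_card_filter_not
        (s := H.U) (p := fun u : V × ℕ => u.2 = T)
      have h2 : ((H.U.filter (fun u => u.2 = T)).card : ℝ) +
          ((H.U.filter (fun u => ¬ u.2 = T)).card : ℝ) = (H.U.card : ℝ) := by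
        exact_mod_cast congrArg (Nat.cast : ℕ → ℝ) this
      linarith [h2]
    have hr3 : (∑ u ∈ W, (G.degree u.1 : ℝ)) + (∑ u ∈ H.Ustar, (G.degree u.1 : ℝ)) =
        ∑ u ∈ H.U, (G.degree u.1 : ℝ) := Finset.sum_sdiff H.ustar_subset
    have hr3b : (∑ u ∈ H.U.filter (fun u => u.2 ≠ T), (G.degree u.1 : ℝ)) +
        (∑ u ∈ H.U.filter (fun u => u.2 = T), (G.degree u.1 : ℝ)) =
        ∑ u ∈ H.U, (G.degree u.1 : ℝ) := by
      have := Finset.sum_filter_add_sum_filter_not H.U (fun u : V × ℕ => u.2 = T)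
        (fun u => (G.degree u.1 : ℝ))
      linarith [this]
    have hr4 : ∑ u ∈ W, ((G.degree u.1 : ℝ) + 1 - (j : ℝ)) =
        (∑ u ∈ W, (G.degree u.1 : ℝ)) + (1 - (j : ℝ)) * (W.card : ℝ) := by
      have : ∀ u ∈ W, (G.degree u.1 : ℝ) + 1 - (j : ℝ) =
          (G.degree u.1 : ℝ) + (1 - (j : ℝ)) := fun u _ => by ring
      rw [Finset.sum_congr rfl this, Finset.sum_add_distrib, Finset.sum_const,
        nsmul_eq_mul]
      ring
    have hr5 : (∑ u ∈ H.Ustar, (G.degree u.1 : ℝ)) ≤ (Δ : ℝ) * (H.Ustar.card : ℝ) := by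
      calc (∑ u ∈ H.Ustar, (G.degree u.1 : ℝ)) ≤ ∑ u ∈ H.Ustar, (Δ : ℝ) :=
            Finset.sum_le_sum fun u _ => by exact_mod_cast hub u.1
        _ = (Δ : ℝ) * (H.Ustar.card : ℝ) := by
            rw [Finset.sum_const, nsmul_eq_mul]; ring
    have hr6 : (δ : ℝ) * ((H.U.filter (fun u => u.2 = T)).card : ℝ) ≤
        ∑ u ∈ H.U.filter (fun u => u.2 = T), (G.degree u.1 : ℝ) := by
      calc (δ : ℝ) * ((H.U.filter (fun u => u.2 = T)).card : ℝ)
          = ∑ u ∈ H.U.filter (fun u => u.2 = T), (δ : ℝ) := by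
            rw [Finset.sum_const, nsmul_eq_mul]; ring
        _ ≤ ∑ u ∈ H.U.filter (fun u => u.2 = T), (G.degree u.1 : ℝ) :=
            Finset.sum_le_sum fun u _ => by exact_mod_cast hlb u.1
    have hr7 : (1 : ℝ) ≤ ((H.U.filter (fun u => u.2 = T)).card : ℝ) := by
      have : (o, T) ∈ H.U.filter (fun u : V × ℕ => u.2 = T) :=
        Finset.mem_filter.mpr ⟨H.root_mem, rfl⟩
      exact_mod_cast Finset.card_pos.mpr ⟨_, this⟩
    rw [hr4] at hsummed
    nlinarith [mul_nonneg (sub_nonneg.mpr hΦδ) (sub_nonneg.mpr hr7), hsummed, hr1, hr2,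
      hr3, hr3b, hr5, hr6]
end
end

section
/- Let 𝒯 = ([n], Ē, ψ) be a Toom cycle rooted at some (o,T) ∈ V×ℕ that is present in the typed dependence graph associated with the Bootstrap Percolation charges A_1^x = {x}, A_2^x (for a witness root r of j ≤ j̄) and an arbitrary noise set N ⊆ V×ℕ≥1. Then |V_∘| = |V_*|, |Ē_1| = |Ē_2|, and |Ē| = 4·(|V_*| − 1). -/
open Classical
noncomputable section

namespace Toom

/-- The upward edge between cyclic positions `v` and `v + 1`. -/
def edgeUp (v : ℕ) : ℕ × ℕ := (v, v + 1)

/-- The downward edge between cyclic positions `v + 1` and `v`. -/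
def edgeDown (v : ℕ) : ℕ × ℕ := (v + 1, v)

/-- The cyclic predecessor of `v` in `[n] = {0, …, n − 1}`. -/
def prev (n v : ℕ) : ℕ := (v + n - 1) % n

/-- `V_∘`: positions with two outgoing edges.  (Following the convention of the paper, the
edge between `0` and `n − 1` is recorded as `(n − 1, n)` if oriented upwards and as
`(n, n − 1)` if oriented downwards.) -/
def Vcirc (n : ℕ) (E : Finset (ℕ × ℕ)) : Finset ℕ :=
  (Finset.range n).filter fun v => edgeDown (prev n v) ∈ E ∧ edgeUp v ∈ E

/-- `V_*`: positions with two incoming edges (the sinks). -/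
def Vstar (n : ℕ) (E : Finset (ℕ × ℕ)) : Finset ℕ :=
  (Finset.range n).filter fun v => edgeUp (prev n v) ∈ E ∧ edgeDown v ∈ E

/-- `V_1`: positions traversed upwards. -/
def Vone (n : ℕ) (E : Finset (ℕ × ℕ)) : Finset ℕ :=
  (Finset.range n).filter fun v => edgeUp (prev n v) ∈ E ∧ edgeUp v ∈ E

/-- `V_2`: positions traversed downwards. -/
def Vtwo (n : ℕ) (E : Finset (ℕ × ℕ)) : Finset ℕ :=
  (Finset.range n).filter fun v => edgeDown v ∈ E ∧ edgeDown (prev n v) ∈ E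

/-- `Ē_1`: the increasing edges. -/
def E1 (E : Finset (ℕ × ℕ)) : Finset (ℕ × ℕ) := E.filter fun e => e.2 = e.1 + 1

/-- `Ē_2`: the decreasing edges. -/
def E2 (E : Finset (ℕ × ℕ)) : Finset (ℕ × ℕ) := E.filter fun e => e.1 = e.2 + 1

/-- A Toom cycle in `𝒱 = V × ℕ` rooted at `ψ 0` (Definition 4.10): an oriented cycle of length
`n`, encoded by its edge set `E`, with `0 ∈ V_∘`, together with a map `ψ : {0, …, n} → V × ℕ`
with `ψ n = ψ 0`, satisfying the two injectivity/ordering conditions. -/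
structure ToomCycle (V : Type*) (n : ℕ) where
  E : Finset (ℕ × ℕ)
  edge_form : ∀ e ∈ E, ∃ v < n, e = edgeUp v ∨ e = edgeDown v
  orient : ∀ v < n, (edgeUp v ∈ E ∧ edgeDown v ∉ E) ∨ (edgeUp v ∉ E ∧ edgeDown v ∈ E)
  ψ : ℕ → V × ℕ
  psi_cyc : ψ n = ψ 0
  zero_circ : 0 ∈ Vcirc n E
  cond_one : ∀ v ∈ Vstar n E, ∀ w < n, v ≠ w → ψ v ≠ ψ w
  cond_two : ∀ s t : Fin 3, s ≤ t →
    ∀ v, (v ∈ ![Vone n E, Vcirc n E, Vtwo n E] s ∨ v = 0) →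
    ∀ w, (w ∈ ![Vone n E, Vcirc n E, Vtwo n E] t ∨ w = 0) →
    ψ v = ψ w → v ≤ w

/-- `(a, b)` is a type-1 (straight) edge of the typed dependence graph with noise set `N`. -/
def Typed1 {V : Type*} (N : Set (V × ℕ)) (a b : V × ℕ) : Prop :=
  a ∉ N ∧ 1 ≤ a.2 ∧ b = (a.1, a.2 - 1)

/-- `(a, b)` is a type-2 (oblique) edge of the typed dependence graph with charges `A2` and
noise set `N`. -/
def Typed2 {V : Type*} (A2 : V → Finset V) (N : Set (V × ℕ)) (a b : V × ℕ) : Prop :=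
  a ∉ N ∧ 1 ≤ a.2 ∧ b.1 ∈ A2 a.1 ∧ b.2 = a.2 - 1

/-- A Toom cycle is present in the typed dependence graph determined by the charges
`A_1^x = {x}`, `A_2^x = A2 x` and the noise set `N` (Definition 4.10).  Sources of edges are
read modulo `n`, in accordance with the convention `ψ n = ψ 0`. -/
def IsPresent {V : Type*} (A2 : V → Finset V) (N : Set (V × ℕ)) {n : ℕ}
    (𝒯 : ToomCycle V n) : Prop :=
  2 ≤ n ∧
  (∀ v ∈ Vstar n 𝒯.E, 𝒯.ψ v ∈ N) ∧
  (∀ e ∈ E1 𝒯.E, (e.1 % n ∈ Vone n 𝒯.E ∨ e.1 % n = 0) →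
    Typed1 N (𝒯.ψ e.1) (𝒯.ψ e.2)) ∧
  (∀ e ∈ E2 𝒯.E, (e.1 % n ∈ Vtwo n 𝒯.E ∨ e.1 % n = 0) →
    Typed2 A2 N (𝒯.ψ e.1) (𝒯.ψ e.2)) ∧
  (∀ e ∈ E1 𝒯.E, (e.1 % n ∈ Vcirc n 𝒯.E ∧ e.1 % n ≠ 0) →
    Typed2 A2 N (𝒯.ψ e.1) (𝒯.ψ e.2)) ∧
  (∀ e ∈ E2 𝒯.E, (e.1 % n ∈ Vcirc n 𝒯.E ∧ e.1 % n ≠ 0) →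
    Typed1 N (𝒯.ψ e.1) (𝒯.ψ e.2))

end Toom

section ToomAux
open Toom Finset

lemma edgeUp_inj : Function.Injective edgeUp := fun a b h => by
  simpa [edgeUp, Prod.ext_iff] using h

lemma edgeDown_inj : Function.Injective edgeDown := fun a b h => by
  simpa [edgeDown, Prod.ext_iff] using h

lemma prev_lt {n : ℕ} (hn : 0 < n) (v : ℕ) : prev n v < n := Nat.mod_lt _ hn

lemma prev_succ {n v : ℕ} (hn : 0 < n) (hv : v < n) : prev n ((v + 1) % n) = v := by
  unfold prev
  have h1 : (v + 1) % n + n - 1 = (v + 1) % n + (n - 1) := by omega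
  rw [h1, Nat.mod_add_mod]
  have h2 : v + 1 + (n - 1) = v + n := by omega
  rw [h2, Nat.add_mod_right, Nat.mod_eq_of_lt hv]

lemma succ_prev {n w : ℕ} (hn : 0 < n) (hw : w < n) : (prev n w + 1) % n = w := by
  unfold prev
  rcases Nat.eq_zero_or_pos w with h0 | h1
  · subst h0
    rw [Nat.zero_add, Nat.mod_eq_of_lt (by omega : n - 1 < n)]
    have h : n - 1 + 1 = n := by omega
    rw [h, Nat.mod_self]
  · have h2 : w + n - 1 = (w - 1) + n := by omega
    rw [h2, Nat.add_mod_right, Nat.mod_eq_of_lt (by omega : w - 1 < n)]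
    have h : w - 1 + 1 = w := by omega
    rw [h, Nat.mod_eq_of_lt hw]

lemma mem_Vcirc {n : ℕ} {E : Finset (ℕ × ℕ)} {v : ℕ} :
    v ∈ Vcirc n E ↔ v < n ∧ edgeDown (prev n v) ∈ E ∧ edgeUp v ∈ E := by
  simp [Vcirc, Finset.mem_filter, Finset.mem_range]

lemma mem_Vstar {n : ℕ} {E : Finset (ℕ × ℕ)} {v : ℕ} :
    v ∈ Vstar n E ↔ v < n ∧ edgeUp (prev n v) ∈ E ∧ edgeDown v ∈ E := by
  simp [Vstar, Finset.mem_filter, Finset.mem_range]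

lemma mem_Vone {n : ℕ} {E : Finset (ℕ × ℕ)} {v : ℕ} :
    v ∈ Vone n E ↔ v < n ∧ edgeUp (prev n v) ∈ E ∧ edgeUp v ∈ E := by
  simp [Vone, Finset.mem_filter, Finset.mem_range]

lemma mem_Vtwo {n : ℕ} {E : Finset (ℕ × ℕ)} {v : ℕ} :
    v ∈ Vtwo n E ↔ v < n ∧ edgeDown v ∈ E ∧ edgeDown (prev n v) ∈ E := by
  simp [Vtwo, Finset.mem_filter, Finset.mem_range]

end ToomAux

open Toom in
/-- Lemma 4.12: for a present Toom cycle for Bootstrap Percolation with charges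
`A_1^x = {x}` and `A_2^x ⊆ S_{k+1}(r) ∩ N(x)`, `|A_2^x| = j` (for a witness root `r` of
`j ≤ j̄`), one has `|V_∘| = |V_*|`, `|Ē_1| = |Ē_2|` and `|Ē| = 4 (|V_*| − 1)`. -/
theorem toom_cycle_edge_count
    {V : Type*} [Infinite V]
    (G : SimpleGraph V) [DecidableRel G.Adj] [∀ v, Fintype (G.neighborSet v)]
    (hconn : G.Connected) (Δ : ℕ) (hΔ : ∀ x, G.degree x ≤ Δ)
    (j : ℕ) (hj1 : 1 ≤ j) (r : V)
    (hr : ∀ x : V,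
      j ≤ ((G.neighborFinset x).filter fun z => G.dist r z = G.dist r x + 1).card)
    (A2 : V → Finset V)
    (hA2sub : ∀ x, A2 x ⊆ G.neighborFinset x)
    (hA2dist : ∀ x, ∀ z ∈ A2 x, G.dist r z = G.dist r x + 1)
    (hA2card : ∀ x, (A2 x).card = j)
    (N : Set (V × ℕ)) (hN : ∀ p ∈ N, 1 ≤ p.2)
    (n : ℕ) (𝒯 : ToomCycle V n) (o : V) (T : ℕ) (hroot : 𝒯.ψ 0 = (o, T))
    (hpres : IsPresent A2 N 𝒯) :
    (Vcirc n 𝒯.E).card = (Vstar n 𝒯.E).card ∧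
    (E1 𝒯.E).card = (E2 𝒯.E).card ∧
    (𝒯.E.card : ℤ) = 4 * ((Vstar n 𝒯.E).card - 1) := by
  classical
  obtain ⟨hn2, hstar, h11, h22, h12, h21⟩ := hpres
  have hn : 0 < n := by omega
  set E := 𝒯.E with hEdef
  have hzc : 0 ∈ Vcirc n E := 𝒯.zero_circ
  -- exclusive orientation facts
  have hnotboth : ∀ v < n, ¬ (edgeUp v ∈ E ∧ edgeDown v ∈ E) := by
    intro v hv h
    rcases 𝒯.orient v hv with ⟨_, h2⟩ | ⟨h1, _⟩
    · exact h2 h.2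
    · exact h1 h.1
  have hdown_of_notup : ∀ v < n, edgeUp v ∉ E → edgeDown v ∈ E := by
    intro v hv h
    rcases 𝒯.orient v hv with ⟨h1, _⟩ | ⟨_, h2⟩
    · exact absurd h1 h
    · exact h2
  -- membership of up and down edges in E1/E2
  have memE1 : ∀ v, edgeUp v ∈ E → edgeUp v ∈ E1 E := fun v h =>
    Finset.mem_filter.mpr ⟨h, rfl⟩
  have memE2 : ∀ v, edgeDown v ∈ E → edgeDown v ∈ E2 E := fun v h =>
    Finset.mem_filter.mpr ⟨h, rfl⟩
  -- typed edge information for up edges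
  have upTyped : ∀ v, v < n → edgeUp v ∈ E →
      (if v ∈ Vcirc n E ∧ v ≠ 0 then Typed2 A2 N (𝒯.ψ v) (𝒯.ψ (v + 1))
       else Typed1 N (𝒯.ψ v) (𝒯.ψ (v + 1))) := by
    intro v hv hup
    have hmod : (edgeUp v).1 % n = v := Nat.mod_eq_of_lt hv
    by_cases hc : v ∈ Vcirc n E ∧ v ≠ 0
    · rw [if_pos hc]
      exact h12 (edgeUp v) (memE1 v hup) (by rw [hmod]; exact hc)
    · rw [if_neg hc]
      refine h11 (edgeUp v) (memE1 v hup) ?_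
      rw [hmod]
      by_cases h0 : v = 0
      · exact Or.inr h0
      · left
        rw [mem_Vone]
        refine ⟨hv, ?_, hup⟩
        by_contra hpu
        have hpd : edgeDown (prev n v) ∈ E := hdown_of_notup _ (prev_lt hn v) hpu
        exact hc ⟨mem_Vcirc.mpr ⟨hv, hpd, hup⟩, h0⟩
  -- typed edge information for down edges
  have downTyped : ∀ v, v < n → edgeDown v ∈ E →
      (if (v + 1) % n ∈ Vtwo n E ∨ (v + 1) % n = 0 then
        Typed2 A2 N (𝒯.ψ (v + 1)) (𝒯.ψ v)
       else Typed1 N (𝒯.ψ (v + 1)) (𝒯.ψ v)) := by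
    intro v hv hdn
    have hmod : (edgeDown v).1 % n = (v + 1) % n := rfl
    by_cases hc : (v + 1) % n ∈ Vtwo n E ∨ (v + 1) % n = 0
    · rw [if_pos hc]
      exact h22 (edgeDown v) (memE2 v hdn) hc
    · rw [if_neg hc]
      push_neg at hc
      have hwlt : (v + 1) % n < n := Nat.mod_lt _ hn
      have hcm : (v + 1) % n ∈ Vcirc n E := by
        rw [mem_Vcirc]
        refine ⟨hwlt, by rw [prev_succ hn hv]; exact hdn, ?_⟩
        by_contra hwu
        have hwd : edgeDown ((v + 1) % n) ∈ E := hdown_of_notup _ hwlt hwu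
        exact hc.1 (mem_Vtwo.mpr ⟨hwlt, hwd, by rw [prev_succ hn hv]; exact hdn⟩)
      exact h21 (edgeDown v) (memE2 v hdn) ⟨hcm, hc.2⟩
  -- when the edge at v goes up, (v+1)%n is not in insert 0 (Vtwo n E)
  have upNotTwo : ∀ v, v < n → edgeUp v ∈ E →
      (v + 1) % n ∉ insert 0 (Vtwo n E) := by
    intro v hv hup h
    have hdn : edgeDown v ∈ E := by
      rcases Finset.mem_insert.mp h with h0 | h2
      · have := (mem_Vcirc.mp hzc).2.1
        rwa [← h0, prev_succ hn hv] at this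
      · have := (mem_Vtwo.mp h2).2.2
        rwa [prev_succ hn hv] at this
    exact hnotboth v hv ⟨hup, hdn⟩
  -- time telescoping step
  have timeStep : ∀ v, v < n →
      ((𝒯.ψ (v + 1)).2 : ℤ) - ((𝒯.ψ v).2 : ℤ) = (if edgeUp v ∈ E then -1 else 1) := by
    intro v hv
    by_cases hup : edgeUp v ∈ E
    · rw [if_pos hup]
      have h := upTyped v hv hup
      have key : 1 ≤ (𝒯.ψ v).2 ∧ (𝒯.ψ (v + 1)).2 = (𝒯.ψ v).2 - 1 := by
        split_ifs at h with hc
        · exact ⟨h.2.1, h.2.2.2⟩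
        · exact ⟨h.2.1, by rw [h.2.2]⟩
      omega
    · rw [if_neg hup]
      have hdn := hdown_of_notup v hv hup
      have h := downTyped v hv hdn
      have key : 1 ≤ (𝒯.ψ (v + 1)).2 ∧ (𝒯.ψ v).2 = (𝒯.ψ (v + 1)).2 - 1 := by
        split_ifs at h with hc
        · exact ⟨h.2.1, h.2.2.2⟩
        · exact ⟨h.2.1, by rw [h.2.2]⟩
      omega
  -- distance telescoping step
  have distStep : ∀ v, v < n →
      ((G.dist r (𝒯.ψ (v + 1)).1 : ℤ) - (G.dist r (𝒯.ψ v).1 : ℤ)) =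
        (if v ∈ (Vcirc n E).erase 0 then 1 else 0) -
        (if (v + 1) % n ∈ insert 0 (Vtwo n E) then 1 else 0) := by
    intro v hv
    by_cases hup : edgeUp v ∈ E
    · rw [if_neg (upNotTwo v hv hup)]
      have h := upTyped v hv hup
      by_cases hc : v ∈ Vcirc n E ∧ v ≠ 0
      · rw [if_pos hc] at h
        rw [if_pos (Finset.mem_erase.mpr ⟨hc.2, hc.1⟩)]
        have := hA2dist _ _ h.2.2.1
        omega
      · rw [if_neg hc] at h
        have h1 : (𝒯.ψ (v + 1)).1 = (𝒯.ψ v).1 := by rw [h.2.2]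
        rw [if_neg (by rw [Finset.mem_erase]; tauto), h1]
        ring
    · have hdn := hdown_of_notup v hv hup
      have hnotc : v ∉ (Vcirc n E).erase 0 := by
        rw [Finset.mem_erase, mem_Vcirc]
        tauto
      rw [if_neg hnotc]
      have h := downTyped v hv hdn
      by_cases hw : (v + 1) % n ∈ Vtwo n E ∨ (v + 1) % n = 0
      · rw [if_pos hw] at h
        have hin : (v + 1) % n ∈ insert 0 (Vtwo n E) := by
          rw [Finset.mem_insert]; tauto
        rw [if_pos hin]
        have := hA2dist _ _ h.2.2.1
        omega
      · rw [if_neg hw] at h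
        have h1 : (𝒯.ψ v).1 = (𝒯.ψ (v + 1)).1 := by rw [h.2.2]
        rw [if_neg (by rw [Finset.mem_insert]; tauto), h1]
        ring
  -- abbreviations
  set U : Finset ℕ := (Finset.range n).filter (fun v => edgeUp v ∈ E) with hU
  set D : Finset ℕ := (Finset.range n).filter (fun v => edgeDown v ∈ E) with hD
  -- time telescope: n = 2 * U.card
  have tsum : ∑ v ∈ Finset.range n, (((𝒯.ψ (v + 1)).2 : ℤ) - ((𝒯.ψ v).2 : ℤ)) = 0 := by
    rw [Finset.sum_range_sub (fun v => ((𝒯.ψ v).2 : ℤ)), 𝒯.psi_cyc]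
    ring
  have tsum2 : ∑ v ∈ Finset.range n, (if edgeUp v ∈ E then (-1 : ℤ) else 1) = 0 := by
    exact (Finset.sum_congr rfl fun v hv =>
      ((timeStep v (Finset.mem_range.mp hv)).symm)).trans tsum
  have hUD : U.card + D.card = n := by
    have hDeq : D = (Finset.range n).filter (fun v => ¬ edgeUp v ∈ E) := by
      apply Finset.filter_congr
      intro v hv
      have hv' := Finset.mem_range.mp hv
      constructor
      · intro h h'
        exact hnotboth v hv' ⟨h', h⟩
      · intro h
        exact hdown_of_notup v hv' h
    rw [hDeq, hU]
    rw [Finset.card_filter_add_card_filter_not, Finset.card_range]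
  have hn2u : n = 2 * U.card := by
    rw [Finset.sum_ite, Finset.sum_const, Finset.sum_const] at tsum2
    have h2 : ((Finset.range n).filter (fun v => ¬ edgeUp v ∈ E)).card
        + U.card = n := by
      rw [hU, Nat.add_comm, Finset.card_filter_add_card_filter_not,
        Finset.card_range]
    simp only [nsmul_eq_mul, smul_eq_mul, mul_one, mul_neg_one] at tsum2
    rw [← hU] at tsum2
    omega
  -- distance telescope : Vcirc.card = Vtwo.card + 2
  have hVcsub : Vcirc n E ⊆ Finset.range n := Finset.filter_subset _ _
  have hVtsub : Vtwo n E ⊆ Finset.range n := Finset.filter_subset _ _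
  have h0notVt : 0 ∉ Vtwo n E := by
    intro h
    exact hnotboth 0 hn ⟨(mem_Vcirc.mp hzc).2.2, (mem_Vtwo.mp h).2.1⟩
  have dsum : ∑ v ∈ Finset.range n,
      ((G.dist r (𝒯.ψ (v + 1)).1 : ℤ) - (G.dist r (𝒯.ψ v).1 : ℤ)) = 0 := by
    rw [Finset.sum_range_sub (fun v => (G.dist r (𝒯.ψ v).1 : ℤ)), 𝒯.psi_cyc]
    ring
  have dsum2 : ∑ v ∈ Finset.range n,
      ((if v ∈ (Vcirc n E).erase 0 then (1 : ℤ) else 0) -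
        (if (v + 1) % n ∈ insert 0 (Vtwo n E) then (1 : ℤ) else 0)) = 0 := by
    exact (Finset.sum_congr rfl fun v hv =>
      ((distStep v (Finset.mem_range.mp hv)).symm)).trans dsum
  have sumA : ∑ v ∈ Finset.range n, (if v ∈ (Vcirc n E).erase 0 then (1 : ℤ) else 0)
      = ((Vcirc n E).erase 0).card := by
    rw [Finset.sum_ite_mem, Finset.inter_eq_right.mpr
      ((Finset.erase_subset _ _).trans hVcsub), Finset.sum_const]
    simp
  have sumB : ∑ v ∈ Finset.range n,
      (if (v + 1) % n ∈ insert 0 (Vtwo n E) then (1 : ℤ) else 0)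
      = (insert 0 (Vtwo n E)).card := by
    have hre : ∑ v ∈ Finset.range n,
        (if (v + 1) % n ∈ insert 0 (Vtwo n E) then (1 : ℤ) else 0)
        = ∑ w ∈ Finset.range n, (if w ∈ insert 0 (Vtwo n E) then (1 : ℤ) else 0) := by
      refine Finset.sum_nbij' (fun v => (v + 1) % n) (fun w => prev n w) ?_ ?_ ?_ ?_ ?_
      · intro a ha
        exact Finset.mem_range.mpr (Nat.mod_lt _ hn)
      · intro a ha
        exact Finset.mem_range.mpr (prev_lt hn a)
      · intro a ha
        exact prev_succ hn (Finset.mem_range.mp ha)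
      · intro a ha
        exact succ_prev hn (Finset.mem_range.mp ha)
      · intro a ha
        rfl
    rw [hre, Finset.sum_ite_mem, Finset.inter_eq_right.mpr
      (Finset.insert_subset (Finset.mem_range.mpr hn) hVtsub), Finset.sum_const]
    simp
  have hccVt : (Vcirc n E).card = (Vtwo n E).card + 2 := by
    rw [Finset.sum_sub_distrib, sumA, sumB] at dsum2
    rw [Finset.card_erase_of_mem hzc, Finset.card_insert_of_notMem h0notVt]
      at dsum2
    have hcc1 : 1 ≤ (Vcirc n E).card := Finset.card_pos.mpr ⟨0, hzc⟩
    omega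
  -- counting identities
  have hsplit1 : Vone n E ∪ Vcirc n E = U := by
    ext v
    rw [Finset.mem_union, mem_Vone, mem_Vcirc, hU, Finset.mem_filter, Finset.mem_range]
    constructor
    · rintro (⟨h1, _, h3⟩ | ⟨h1, _, h3⟩) <;> exact ⟨h1, h3⟩
    · rintro ⟨h1, h2⟩
      by_cases hp : edgeUp (prev n v) ∈ E
      · exact Or.inl ⟨h1, hp, h2⟩
      · exact Or.inr ⟨h1, hdown_of_notup _ (prev_lt hn v) hp, h2⟩
  have hdisj1 : Disjoint (Vone n E) (Vcirc n E) := by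
    rw [Finset.disjoint_left]
    intro v h1 h2
    exact hnotboth (prev n v) (prev_lt hn v) ⟨(mem_Vone.mp h1).2.1, (mem_Vcirc.mp h2).2.1⟩
  have hc1 : (Vone n E).card + (Vcirc n E).card = U.card := by
    rw [← Finset.card_union_of_disjoint hdisj1, hsplit1]
  have hsplit2 : Vtwo n E ∪ Vstar n E = D := by
    ext v
    rw [Finset.mem_union, mem_Vtwo, mem_Vstar, hD, Finset.mem_filter, Finset.mem_range]
    constructor
    · rintro (⟨h1, h2, _⟩ | ⟨h1, _, h3⟩)
      · exact ⟨h1, h2⟩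
      · exact ⟨h1, h3⟩
    · rintro ⟨h1, h2⟩
      by_cases hp : edgeUp (prev n v) ∈ E
      · exact Or.inr ⟨h1, hp, h2⟩
      · exact Or.inl ⟨h1, h2, hdown_of_notup _ (prev_lt hn v) hp⟩
  have hdisj2 : Disjoint (Vtwo n E) (Vstar n E) := by
    rw [Finset.disjoint_left]
    intro v h1 h2
    exact hnotboth (prev n v) (prev_lt hn v) ⟨(mem_Vstar.mp h2).2.1, (mem_Vtwo.mp h1).2.2⟩
  have hc2 : (Vtwo n E).card + (Vstar n E).card = D.card := by
    rw [← Finset.card_union_of_disjoint hdisj2, hsplit2]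
  -- Vone ∪ Vstar counted by prev-bijection
  have hsplit3 : Vone n E ∪ Vstar n E
      = (Finset.range n).filter (fun w => edgeUp (prev n w) ∈ E) := by
    ext v
    rw [Finset.mem_union, mem_Vone, mem_Vstar, Finset.mem_filter, Finset.mem_range]
    constructor
    · rintro (⟨h1, h2, _⟩ | ⟨h1, h2, _⟩) <;> exact ⟨h1, h2⟩
    · rintro ⟨h1, h2⟩
      by_cases hp : edgeUp v ∈ E
      · exact Or.inl ⟨h1, h2, hp⟩
      · exact Or.inr ⟨h1, h2, hdown_of_notup _ h1 hp⟩
  have hdisj3 : Disjoint (Vone n E) (Vstar n E) := by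
    rw [Finset.disjoint_left]
    intro v h1 h2
    exact hnotboth v (mem_Vone.mp h1).1 ⟨(mem_Vone.mp h1).2.2, (mem_Vstar.mp h2).2.2⟩
  have hPcard : ((Finset.range n).filter (fun w => edgeUp (prev n w) ∈ E)).card
      = U.card := by
    refine Finset.card_nbij' (fun w => prev n w) (fun v => (v + 1) % n) ?_ ?_ ?_ ?_
    · intro a ha
      rw [Finset.mem_coe, Finset.mem_filter, Finset.mem_range] at ha
      rw [Finset.mem_coe, hU, Finset.mem_filter, Finset.mem_range]
      exact ⟨prev_lt hn a, ha.2⟩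
    · intro a ha
      rw [Finset.mem_coe, hU, Finset.mem_filter, Finset.mem_range] at ha
      rw [Finset.mem_coe, Finset.mem_filter, Finset.mem_range, prev_succ hn ha.1]
      exact ⟨Nat.mod_lt _ hn, ha.2⟩
    · intro a ha
      rw [Finset.mem_coe, Finset.mem_filter, Finset.mem_range] at ha
      exact succ_prev hn ha.1
    · intro a ha
      rw [Finset.mem_coe, hU, Finset.mem_filter, Finset.mem_range] at ha
      exact prev_succ hn ha.1
  have hc3 : (Vone n E).card + (Vstar n E).card = U.card := by
    rw [← Finset.card_union_of_disjoint hdisj3, hsplit3, hPcard]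
  -- E = E1 ∪ E2 and cardinalities
  have hE1card : (E1 E).card = U.card := by
    have hE1eq : E1 E = U.image edgeUp := by
      ext e
      rw [E1, Finset.mem_filter, Finset.mem_image]
      constructor
      · rintro ⟨he, hform⟩
        obtain ⟨v, hv, hor⟩ := 𝒯.edge_form e he
        rcases hor with h | h
        · refine ⟨v, ?_, h.symm⟩
          rw [hU, Finset.mem_filter, Finset.mem_range]
          exact ⟨hv, h ▸ he⟩
        · exfalso
          rw [h] at hform
          simp [edgeDown] at hform
          omega
      · rintro ⟨v, hv, rfl⟩
        rw [hU, Finset.mem_filter] at hv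
        exact ⟨hv.2, rfl⟩
    rw [hE1eq, Finset.card_image_of_injective _ edgeUp_inj]
  have hE2card : (E2 E).card = D.card := by
    have hE2eq : E2 E = D.image edgeDown := by
      ext e
      rw [E2, Finset.mem_filter, Finset.mem_image]
      constructor
      · rintro ⟨he, hform⟩
        obtain ⟨v, hv, hor⟩ := 𝒯.edge_form e he
        rcases hor with h | h
        · exfalso
          rw [h] at hform
          simp [edgeUp] at hform
          omega
        · refine ⟨v, ?_, h.symm⟩
          rw [hD, Finset.mem_filter, Finset.mem_range]
          exact ⟨hv, h ▸ he⟩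
      · rintro ⟨v, hv, rfl⟩
        rw [hD, Finset.mem_filter] at hv
        exact ⟨hv.2, rfl⟩
    rw [hE2eq, Finset.card_image_of_injective _ edgeDown_inj]
  have hEcard : E.card = (E1 E).card + (E2 E).card := by
    have hEsplit : E = E1 E ∪ E2 E := by
      ext e
      rw [Finset.mem_union, E1, E2, Finset.mem_filter, Finset.mem_filter]
      constructor
      · intro he
        obtain ⟨v, hv, hor⟩ := 𝒯.edge_form e he
        rcases hor with h | h
        · exact Or.inl ⟨he, by rw [h]; rfl⟩
        · exact Or.inr ⟨he, by rw [h]; rfl⟩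
      · rintro (h | h) <;> exact h.1
    have hdisjE : Disjoint (E1 E) (E2 E) := by
      rw [Finset.disjoint_left]
      intro e h1 h2
      rw [E1, Finset.mem_filter] at h1
      rw [E2, Finset.mem_filter] at h2
      omega
    rw [← Finset.card_union_of_disjoint hdisjE, ← hEsplit]
  -- conclusion
  have hccs : (Vcirc n E).card = (Vstar n E).card := by omega
  refine ⟨hccs, by omega, ?_⟩
  have h2le : 2 ≤ (Vstar n E).card := by omega
  push_cast
  omega
end
end
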